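/- arXiv:2110.06788 — 6 statements merged into one kernel-verified Lean document; each statement's English description precedes it below -/
import Mathlib

section
/- Let ω be a weight, let 1 ≤ d₁ ≤ d be integers, and let z₁,…,z_d ∈ ℂ be distinct points with |z_i| = 1 for 1 ≤ i ≤ d₁ and |z_i| > 1 for d₁ < i ≤ d. Let E be the d×d matrix with entries e_{l,m} = k_{n+d}(z_l, z_m). Then there exists a constant δ > 0, independent of n, such that for every n ∈ ℕ, det(E) ≥ δ · (S_{n+d}^{d₁}/ω_{n+d}^{d−d₁}) · ∏_{l=1}^d |z_l|^{2(n+d+1)}. -/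
open Polynomial Filter Topology MeasureTheory Metric Asymptotics
open Finset Matrix

noncomputable section

/-- A weight: positive, monotone, ω₀ = 1, ω_n/ω_{n-⌊√n⌋} → 1, ∑ 1/ω_k = ∞. -/
def IsWeight (ω : ℕ → ℝ) : Prop :=
  (∀ k, 0 < ω k) ∧ (Monotone ω ∨ Antitone ω) ∧ ω 0 = 1 ∧
    Filter.Tendsto (fun n => ω n / ω (n - Nat.sqrt n)) Filter.atTop (nhds 1) ∧
    ¬ Summable (fun k => 1 / ω k)

/-- Squared H²_ω norm of a polynomial. -/
def wNormSq (ω : ℕ → ℝ) (g : Polynomial ℂ) : ℝ :=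
  ∑ k ∈ Finset.range (g.natDegree + 1), ω k * ‖g.coeff k‖ ^ 2

/-- `p` is the n-th optimal polynomial approximant to `1/f` in `H²_ω`. -/
def IsOPA (ω : ℕ → ℝ) (f : Polynomial ℂ) (n : ℕ) (p : Polynomial ℂ) : Prop :=
  p.degree ≤ (n : ℕ) ∧ ∀ q : Polynomial ℂ, q.degree ≤ (n : ℕ) →
    wNormSq ω (1 - p * f) ≤ wNormSq ω (1 - q * f)

/-- Partial sums `S_N = ∑_{k=0}^N 1/ω_k`. -/
def S (ω : ℕ → ℝ) (N : ℕ) : ℝ := ∑ k ∈ Finset.range (N + 1), 1 / ω k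

/-- Truncated reproducing kernel `k_N(z,b) = ∑_{k=0}^N b̄^k z^k / ω_k`. -/
def kN (ω : ℕ → ℝ) (N : ℕ) (z b : ℂ) : ℂ :=
  ∑ k ∈ Finset.range (N + 1), (starRingEnd ℂ b) ^ k * z ^ k / (ω k : ℂ)

/-- Zero-counting probability measure of a polynomial: the average of Dirac
masses at its roots, counted with multiplicity. -/
def zeroMeasure (q : Polynomial ℂ) : Measure ℂ :=
  (q.natDegree : ENNReal)⁻¹ • (q.roots.map (fun z => Measure.dirac z)).sum

/-- Normalized arclength (uniform) measure on the unit circle. -/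
def nuT : Measure ℂ :=
  (ENNReal.ofReal (2 * Real.pi))⁻¹ •
    Measure.map (fun θ : ℝ => Complex.exp (θ * Complex.I))
      (MeasureTheory.volume.restrict (Set.Ioc 0 (2 * Real.pi)))




noncomputable def S' (ω : ℕ → ℝ) (N : ℕ) : ℝ := ∑ k ∈ Finset.range (N + 1), 1 / ω k


-- Cauchy-Schwarz for complex sums
lemma cs_complex {n : Type*} [Fintype n] (u v : n → ℂ) :
    Complex.normSq (∑ i, u i * v i) ≤ (∑ i, Complex.normSq (u i)) * (∑ i, Complex.normSq (v i)) := by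
  have h1 : ‖∑ i, u i * v i‖ ≤ ∑ i, ‖u i‖ * ‖v i‖ := by
    refine (norm_sum_le _ _).trans ?_
    simp [_root_.map_mul, le_refl]
  have h2 := Finset.sum_mul_sq_le_sq_mul_sq Finset.univ (fun i => ‖u i‖)
      (fun i => ‖v i‖)
  calc Complex.normSq (∑ i, u i * v i) = ‖∑ i, u i * v i‖ ^ 2 := by
        rw [Complex.sq_norm]
    _ ≤ (∑ i, ‖u i‖ * ‖v i‖) ^ 2 := by
        apply pow_le_pow_left₀ (norm_nonneg _) h1
    _ ≤ (∑ i, ‖u i‖ ^ 2) * (∑ i, ‖v i‖ ^ 2) := h2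
    _ = _ := by simp [Complex.sq_norm]

/-- Turán-type window lemma. -/
lemma window {r : ℕ} (ζ : Fin r → ℂ) (hinj : Function.Injective ζ) (i₀ : Fin r) :
    ∃ C : ℝ, 1 ≤ C ∧ ∀ (t : ℕ) (a : Fin r → ℂ),
      ‖ζ i₀‖ ^ (2 * t) * Complex.normSq (a i₀) ≤
        C * ∑ s : Fin r, Complex.normSq (∑ j, a j * ζ j ^ (t + (s : ℕ))) := by
  classical
  set W : Matrix (Fin r) (Fin r) ℂ := (Matrix.vandermonde ζ)ᵀ with hW
  have hdet : W.det ≠ 0 := by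
    rw [hW, Matrix.det_transpose, Matrix.det_vandermonde]
    refine Finset.prod_ne_zero_iff.2 fun i _ => Finset.prod_ne_zero_iff.2 fun j hj => ?_
    have hij : i < j := Finset.mem_Ioi.1 hj
    exact sub_ne_zero.2 fun h => absurd (hinj h.symm) hij.ne'.symm
  have := W.invertibleOfIsUnitDet (isUnit_iff_ne_zero.2 hdet)
  refine ⟨max 1 (∑ s : Fin r, Complex.normSq (W⁻¹ i₀ s)), le_max_left _ _, fun t a => ?_⟩
  set b : Fin r → ℂ := fun j => a j * ζ j ^ t with hb
  set p : Fin r → ℂ := W.mulVec b with hp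
  have hrec : b = W⁻¹.mulVec p := by
    rw [hp, Matrix.mulVec_mulVec, Matrix.nonsing_inv_mul _ (isUnit_iff_ne_zero.2 hdet),
      Matrix.one_mulVec]
  have hps : ∀ s : Fin r, p s = ∑ j, a j * ζ j ^ (t + (s : ℕ)) := by
    intro s
    rw [hp, Matrix.mulVec]
    simp only [dotProduct, hW, Matrix.transpose_apply, Matrix.vandermonde_apply, hb]
    refine Finset.sum_congr rfl fun j _ => ?_
    rw [pow_add]; ring
  have hbi : Complex.normSq (b i₀) ≤
      (∑ s : Fin r, Complex.normSq (W⁻¹ i₀ s)) * (∑ s : Fin r, Complex.normSq (p s)) := by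
    have : b i₀ = ∑ s, W⁻¹ i₀ s * p s := by rw [hrec]; rfl
    rw [this]; exact cs_complex _ _
  have hlhs : ‖ζ i₀‖ ^ (2 * t) * Complex.normSq (a i₀) = Complex.normSq (b i₀) := by
    rw [hb]
    simp only [Complex.normSq_eq_norm_sq, norm_mul, norm_pow]
    ring
  rw [hlhs]
  calc Complex.normSq (b i₀) ≤ (∑ s : Fin r, Complex.normSq (W⁻¹ i₀ s)) *
        (∑ s : Fin r, Complex.normSq (p s)) := hbi
    _ ≤ max 1 (∑ s : Fin r, Complex.normSq (W⁻¹ i₀ s)) * (∑ s : Fin r, Complex.normSq (p s)) := by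
        apply mul_le_mul_of_nonneg_right (le_max_right _ _)
        exact Finset.sum_nonneg fun s _ => Complex.normSq_nonneg _
    _ = _ := by rw [show (∑ s : Fin r, Complex.normSq (p s)) = ∑ s : Fin r, Complex.normSq (∑ j, a j * ζ j ^ (t + (s:ℕ))) from Finset.sum_congr rfl fun s _ => by rw [hps s]]


/-- Gram determinant lower bound via distances to spans of previous rows. -/
lemma gram_det_ge (K : ℕ) (w : ℕ → Fin K → ℂ) (m : ℕ → ℝ) :
    ∀ L : ℕ, (∀ i, i < L → 0 < m i) →
    (∀ i, i < L → ∀ x : ℕ → ℂ,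
      m i ≤ ∑ k : Fin K, Complex.normSq (w i k - ∑ j ∈ Finset.range i, x j * w j k)) →
    ((Matrix.of fun i j : Fin L =>
        ∑ k : Fin K, w (i : ℕ) k * (starRingEnd ℂ) (w (j : ℕ) k)).det.im = 0 ∧
      ∏ i ∈ Finset.range L, m i ≤
        (Matrix.of fun i j : Fin L =>
          ∑ k : Fin K, w (i : ℕ) k * (starRingEnd ℂ) (w (j : ℕ) k)).det.re) := by
  classical
  set gg : ℕ → ℕ → ℂ := fun i j => ∑ k : Fin K, w i k * (starRingEnd ℂ) (w j k) with hgg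
  intro L
  induction L with
  | zero => intro _ _; simp [Matrix.det_fin_zero]
  | succ L IH =>
    intro hm hdist
    obtain ⟨ihim, ihre⟩ := IH (fun i hi => hm i (by omega)) (fun i hi => hdist i (by omega))
    set A : Matrix (Fin L) (Fin L) ℂ :=
      Matrix.of (fun i j : Fin L => gg (i : ℕ) (j : ℕ)) with hA
    have hApos : 0 < A.det.re := lt_of_lt_of_le (Finset.prod_pos fun i hi =>
      hm i (by simp at hi; omega)) ihre
    have hAdet : A.det ≠ 0 := fun h => by rw [h] at hApos; simp at hApos
    have : Invertible A := A.invertibleOfIsUnitDet (isUnit_iff_ne_zero.2 hAdet)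
    set u : Fin L → ℂ := fun j => gg (j : ℕ) L with hu
    set y : Fin L → ℂ := A⁻¹ *ᵥ u with hy
    have hAy : A *ᵥ y = u := by
      rw [hy, Matrix.mulVec_mulVec, Matrix.mul_nonsing_inv _ (isUnit_iff_ne_zero.2 hAdet),
        Matrix.one_mulVec]
    -- the residual vector
    set Q : Fin K → ℂ := fun k => w L k - ∑ j : Fin L, (starRingEnd ℂ) (y j) * w (j : ℕ) k with hQ
    have hconjQ : ∀ k, (starRingEnd ℂ) (Q k) =
        (starRingEnd ℂ) (w L k) - ∑ j : Fin L, y j * (starRingEnd ℂ) (w (j : ℕ) k) := by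
      intro k
      simp only [hQ, map_sub, map_sum, _root_.map_mul, Complex.conj_conj]
    have horth : ∀ i : Fin L, (∑ k : Fin K, w (i : ℕ) k * (starRingEnd ℂ) (Q k)) = 0 := by
      intro i
      have : (∑ k : Fin K, w (i : ℕ) k * (starRingEnd ℂ) (Q k))
          = gg (i : ℕ) L - ∑ j : Fin L, y j * gg (i : ℕ) (j : ℕ) := by
        simp only [hconjQ, mul_sub, Finset.sum_sub_distrib, Finset.mul_sum]
        congr 1
        rw [Finset.sum_comm]
        refine Finset.sum_congr rfl fun j _ => ?_
        rw [hgg]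
        simp only [Finset.mul_sum]
        refine Finset.sum_congr rfl fun k _ => by ring
      rw [this]
      have hAyi := congrFun hAy i
      rw [Matrix.mulVec, dotProduct] at hAyi
      have : ∑ j : Fin L, y j * gg (i : ℕ) (j : ℕ) = u i := by
        rw [← hAyi]; exact Finset.sum_congr rfl fun j _ => by rw [hA]; simp [mul_comm]
      rw [this, hu]; ring
    have hwLQ : (∑ k : Fin K, w L k * (starRingEnd ℂ) (Q k))
        = gg L L - ∑ j : Fin L, y j * gg L (j : ℕ) := by
      simp only [hconjQ, mul_sub, Finset.sum_sub_distrib, Finset.mul_sum]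
      congr 1
      rw [Finset.sum_comm]
      refine Finset.sum_congr rfl fun j _ => ?_
      rw [hgg]
      simp only [Finset.mul_sum]
      refine Finset.sum_congr rfl fun k _ => by ring
    have hQQ : (∑ k : Fin K, Q k * (starRingEnd ℂ) (Q k))
        = gg L L - ∑ j : Fin L, y j * gg L (j : ℕ) := by
      have : (∑ k : Fin K, Q k * (starRingEnd ℂ) (Q k))
          = (∑ k : Fin K, w L k * (starRingEnd ℂ) (Q k))
            - ∑ j : Fin L, (starRingEnd ℂ) (y j) *
                ∑ k : Fin K, w (j : ℕ) k * (starRingEnd ℂ) (Q k) := by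
        simp only [hQ, sub_mul, Finset.sum_sub_distrib, Finset.sum_mul, Finset.mul_sum]
        congr 1
        rw [Finset.sum_comm]
        exact Finset.sum_congr rfl fun j _ => Finset.sum_congr rfl fun k _ => mul_assoc _ _ _
      rw [this, hwLQ]
      simp only [horth, mul_zero, Finset.sum_const_zero, sub_zero]
    -- block decomposition
    set B : Matrix (Fin L) (Fin 1) ℂ := Matrix.of fun i _ => gg (i : ℕ) L with hB
    set Cm : Matrix (Fin 1) (Fin L) ℂ := Matrix.of fun _ j => gg L (j : ℕ) with hCm
    set D : Matrix (Fin 1) (Fin 1) ℂ := Matrix.of fun _ _ => gg L L with hD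
    have hsub : (Matrix.of fun i j : Fin (L+1) => gg (i : ℕ) (j : ℕ)) =
        (Matrix.fromBlocks A B Cm D).submatrix finSumFinEquiv.symm finSumFinEquiv.symm := by
      ext i j
      simp only [Matrix.submatrix_apply, Matrix.of_apply]
      rcases h1 : finSumFinEquiv.symm i with i' | i' <;>
        rcases h2 : finSumFinEquiv.symm j with j' | j' <;>
        rw [Equiv.symm_apply_eq] at h1 h2 <;> subst h1 <;> subst h2 <;>
        simp [Matrix.fromBlocks, finSumFinEquiv_apply_left, finSumFinEquiv_apply_right,
          Fin.coe_castAdd, Fin.coe_natAdd, hA, hB, hCm, hD, Fin.val_eq_zero]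
    have hdet1 : (Matrix.of fun i j : Fin (L+1) => gg (i : ℕ) (j : ℕ)).det
        = (Matrix.fromBlocks A B Cm D).det := by
      rw [hsub, Matrix.det_submatrix_equiv_self]
    have hdet2 : (Matrix.fromBlocks A B Cm D).det = A.det * (D - Cm * ⅟A * B).det :=
      Matrix.det_fromBlocks₁₁ A B Cm D
    have hAinvB : ∀ j : Fin L, (A⁻¹ * B) j 0 = y j := by
      intro j
      rw [Matrix.mul_apply, hy, Matrix.mulVec, dotProduct]
      rfl
    have hdet3 : (D - Cm * ⅟A * B).det = gg L L - ∑ j : Fin L, y j * gg L (j : ℕ) := by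
      rw [Matrix.det_fin_one]
      simp only [Matrix.sub_apply, Matrix.invOf_eq_nonsing_inv]
      rw [Matrix.mul_assoc, Matrix.mul_apply]
      congr 1
      refine Finset.sum_congr rfl fun j _ => ?_
      rw [hAinvB j, hCm]
      simp [mul_comm]
    have hsum : (gg L L - ∑ j : Fin L, y j * gg L (j : ℕ))
        = ((∑ k : Fin K, Complex.normSq (Q k) : ℝ) : ℂ) := by
      rw [← hQQ]
      rw [Complex.ofReal_sum]
      exact Finset.sum_congr rfl fun k _ => (Complex.mul_conj (Q k)).symm ▸ rfl
    set t : ℝ := ∑ k : Fin K, Complex.normSq (Q k) with hts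
    have hG : (Matrix.of fun i j : Fin (L+1) => gg (i : ℕ) (j : ℕ)).det = A.det * (t : ℂ) := by
      rw [hdet1, hdet2, hdet3, hsum]
    have ht : m L ≤ t := by
      have hh := hdist L (by omega) (fun j => if h : j < L then (starRingEnd ℂ) (y ⟨j, h⟩) else 0)
      have heq : ∀ k : Fin K, (∑ j ∈ Finset.range L,
          (if h : j < L then (starRingEnd ℂ) (y ⟨j, h⟩) else 0) * w j k)
          = ∑ j : Fin L, (starRingEnd ℂ) (y j) * w (j : ℕ) k := by
        intro k
        rw [Finset.sum_range fun j => (if h : j < L then (starRingEnd ℂ) (y ⟨j, h⟩) else 0) * w j k]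
        refine Finset.sum_congr rfl fun j _ => ?_
        simp [j.isLt]
      calc m L ≤ ∑ k : Fin K, Complex.normSq (w L k - ∑ j ∈ Finset.range L,
          (if h : j < L then (starRingEnd ℂ) (y ⟨j, h⟩) else 0) * w j k) := hh
        _ = t := by
          rw [hts]
          exact Finset.sum_congr rfl fun k _ => by rw [heq k, hQ]
    have htpos : 0 < t := lt_of_lt_of_le (hm L (by omega)) ht
    constructor
    · rw [hG, Complex.mul_im]
      simp [ihim]
    · rw [hG, Complex.mul_re]
      simp only [Complex.ofReal_re, Complex.ofReal_im, ihim, mul_zero, zero_mul, sub_zero]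
      rw [Finset.prod_range_succ]
      exact mul_le_mul ihre ht (le_of_lt (hm L (by omega))) (le_of_lt hApos)



lemma sum_range_mul' {β : Type*} [AddCommMonoid β] (f : ℕ → β) (M r : ℕ) :
    ∑ k ∈ Finset.range (M * r), f k
      = ∑ b ∈ Finset.range M, ∑ s ∈ Finset.range r, f (b * r + s) := by
  induction M with
  | zero => simp
  | succ M ih =>
    rw [Nat.succ_mul, Finset.sum_range_add, ih, Finset.sum_range_succ]

lemma range_split (f : ℕ → ℝ) (a N : ℕ) (h : a ≤ N + 1) :
    ∑ k ∈ Finset.range (N + 1), f k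
      = ∑ k ∈ Finset.range a, f k + ∑ k ∈ Finset.Ico a (N + 1), f k := by
  have h2 : N + 1 = a + (N + 1 - a) := by omega
  rw [Finset.sum_Ico_eq_sum_range]
  conv_lhs => rw [h2, Finset.sum_range_add]

lemma blocks_ge (ω : ℕ → ℝ) (hpos : ∀ k, 0 < ω k) (hmono : Monotone ω ∨ Antitone ω)
    (hω0 : ω 0 = 1) (G : ℕ → ℝ) (hG : ∀ k, 0 ≤ G k) (N r : ℕ) (hr : 1 ≤ r)
    (hrN : r ≤ N + 1) (ε : ℝ) (hε : 0 ≤ ε)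
    (hwin : ∀ t, t + r ≤ N + 1 → ε ≤ ∑ s ∈ Finset.range r, G (t + s)) :
    ε * (S' ω N - 2 * r * (1 + 1 / ω N)) ≤ r * ∑ k ∈ Finset.range (N + 1), G k / ω k := by
  have hM1 : 1 ≤ (N + 1) / r := (Nat.one_le_div_iff hr).2 hrN
  set M := (N + 1) / r with hM
  have hMr : M * r ≤ N + 1 := by
    have := Nat.div_mul_le_self (N + 1) r; rw [← hM] at this; exact this
  have hMr2 : N + 1 < (M + 1) * r := by
    have h1 := Nat.div_add_mod (N + 1) r
    rw [← hM] at h1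
    have h2 : (N + 1) % r < r := Nat.mod_lt _ hr
    have h3 : (M + 1) * r = r * M + r := by ring
    omega
  have step1 : ∑ k ∈ Finset.range (M * r), G k / ω k
      ≤ ∑ k ∈ Finset.range (N + 1), G k / ω k := by
    apply Finset.sum_le_sum_of_subset_of_nonneg
    · exact Finset.range_subset_range.2 hMr
    · intro k _ _; exact div_nonneg (hG k) (le_of_lt (hpos k))
  rw [sum_range_mul'] at step1
  have invnn : ∀ k : ℕ, (0:ℝ) ≤ 1 / ω k := fun k => le_of_lt (div_pos one_pos (hpos k))
  have hwinb : ∀ b, b < M → ε ≤ ∑ s ∈ Finset.range r, G (b * r + s) := by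
    intro b hb
    refine hwin (b * r) ?_
    have h1 : (b + 1) * r ≤ M * r := Nat.mul_le_mul_right r (by omega)
    have h2 : (b + 1) * r = b * r + r := by ring
    omega
  rcases hmono with hmon | hant
  · -- Monotone case: use right endpoint of each block
    have hblock : ∀ b, b < M → ε * (1 / ω (b * r + r - 1))
        ≤ ∑ s ∈ Finset.range r, G (b * r + s) / ω (b * r + s) := by
      intro b hb
      have h1 : ∀ s ∈ Finset.range r, G (b * r + s) * (1 / ω (b * r + r - 1))
          ≤ G (b * r + s) / ω (b * r + s) := by
        intro s hs
        simp only [Finset.mem_range] at hs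
        simp only [div_eq_mul_inv, one_mul]
        exact mul_le_mul_of_nonneg_left (inv_anti₀ (hpos _) (hmon (by omega))) (hG _)
      calc ε * (1 / ω (b * r + r - 1))
          ≤ (∑ s ∈ Finset.range r, G (b * r + s)) * (1 / ω (b * r + r - 1)) :=
            mul_le_mul_of_nonneg_right (hwinb b hb) (invnn _)
        _ = ∑ s ∈ Finset.range r, G (b * r + s) * (1 / ω (b * r + r - 1)) := by rw [Finset.sum_mul]
        _ ≤ _ := Finset.sum_le_sum h1
    have hcsum : (S' ω N - 2 * r * (1 + 1 / ω N))
        ≤ r * ∑ b ∈ Finset.range M, 1 / ω (b * r + r - 1) := by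
      have h2 : ∀ b : ℕ, (∑ s ∈ Finset.range r, 1 / ω (b * r + r - 1 + s))
          ≤ r * (1 / ω (b * r + r - 1)) := by
        intro b
        have h2a : ∀ s ∈ Finset.range r, 1 / ω (b * r + r - 1 + s) ≤ 1 / ω (b * r + r - 1) := by
          intro s _
          rw [one_div, one_div]
          exact inv_anti₀ (hpos _) (hmon (by omega))
        calc ∑ s ∈ Finset.range r, 1 / ω (b * r + r - 1 + s)
            ≤ ∑ _s ∈ Finset.range r, 1 / ω (b * r + r - 1) := Finset.sum_le_sum h2a
          _ = r * (1 / ω (b * r + r - 1)) := by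
              rw [Finset.sum_const, Finset.card_range, nsmul_eq_mul]
      have h3 : ∑ k ∈ Finset.range (M * r), 1 / ω (k + (r - 1))
          = ∑ b ∈ Finset.range M, ∑ s ∈ Finset.range r, 1 / ω (b * r + r - 1 + s) := by
        rw [sum_range_mul' (fun k => 1 / ω (k + (r - 1))) M r]
        refine Finset.sum_congr rfl fun b _ => Finset.sum_congr rfl fun s _ => ?_
        have hh : b * r + s + (r - 1) = b * r + r - 1 + s := by omega
        rw [hh]
      have h4 : ∑ k ∈ Finset.range (M * r), 1 / ω (k + (r - 1))
          = ∑ k ∈ Finset.Ico (r - 1) (M * r + (r - 1)), 1 / ω k := by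
        rw [Finset.sum_Ico_eq_sum_range]
        refine Finset.sum_congr (by congr 1; omega) fun k _ => by rw [Nat.add_comm]
      have h5 : ∑ k ∈ Finset.Ico (r - 1) (N + 1), 1 / ω k
          ≤ ∑ k ∈ Finset.Ico (r - 1) (M * r + (r - 1)), 1 / ω k := by
        apply Finset.sum_le_sum_of_subset_of_nonneg
        · refine Finset.Ico_subset_Ico le_rfl ?_
          have : (M + 1) * r = M * r + r := by ring
          omega
        · intro k _ _; exact invnn k
      have h6 : S' ω N - r ≤ ∑ k ∈ Finset.Ico (r - 1) (N + 1), 1 / ω k := by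
        have hsplit : ∑ k ∈ Finset.range (r - 1), 1 / ω k
            + ∑ k ∈ Finset.Ico (r - 1) (N + 1), 1 / ω k = S' ω N :=
          (range_split (fun k => 1 / ω k) (r - 1) N (by omega)).symm
        have hsmall : ∑ k ∈ Finset.range (r - 1), 1 / ω k ≤ r := by
          have h7 : ∀ k ∈ Finset.range (r - 1), 1 / ω k ≤ 1 := by
            intro k _
            rw [one_div]
            refine inv_le_one_of_one_le₀ ?_
            calc (1 : ℝ) = ω 0 := hω0.symm
              _ ≤ ω k := hmon (Nat.zero_le k)
          calc ∑ k ∈ Finset.range (r - 1), 1 / ω k ≤ ∑ _k ∈ Finset.range (r - 1), (1:ℝ) :=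
              Finset.sum_le_sum h7
            _ = ((r - 1 : ℕ) : ℝ) := by rw [Finset.sum_const, Finset.card_range, nsmul_eq_mul, mul_one]
            _ ≤ r := by exact_mod_cast Nat.sub_le r 1
        linarith
      have h8 : S' ω N - 2 * r * (1 + 1 / ω N) ≤ S' ω N - r := by
        have h9 : (0:ℝ) < 1 / ω N := div_pos one_pos (hpos N)
        have h10 : (0:ℝ) ≤ r := by positivity
        nlinarith
      calc S' ω N - 2 * r * (1 + 1 / ω N) ≤ S' ω N - r := h8
        _ ≤ ∑ k ∈ Finset.Ico (r - 1) (N + 1), 1 / ω k := h6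
        _ ≤ ∑ k ∈ Finset.Ico (r - 1) (M * r + (r - 1)), 1 / ω k := h5
        _ = ∑ b ∈ Finset.range M, ∑ s ∈ Finset.range r, 1 / ω (b * r + r - 1 + s) := by
            rw [← h4, h3]
        _ ≤ ∑ b ∈ Finset.range M, r * (1 / ω (b * r + r - 1)) := Finset.sum_le_sum fun b _ => h2 b
        _ = r * ∑ b ∈ Finset.range M, 1 / ω (b * r + r - 1) := by rw [Finset.mul_sum]
    calc ε * (S' ω N - 2 * r * (1 + 1 / ω N))
        ≤ ε * (r * ∑ b ∈ Finset.range M, 1 / ω (b * r + r - 1)) :=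
          mul_le_mul_of_nonneg_left hcsum hε
      _ = r * ∑ b ∈ Finset.range M, ε * (1 / ω (b * r + r - 1)) := by
          rw [Finset.mul_sum, Finset.mul_sum]
          rw [Finset.mul_sum]
          refine Finset.sum_congr rfl fun b _ => by ring
      _ ≤ r * ∑ b ∈ Finset.range M, ∑ s ∈ Finset.range r, G (b * r + s) / ω (b * r + s) := by
          refine mul_le_mul_of_nonneg_left (Finset.sum_le_sum fun b hb => hblock b ?_) ?_
          · simpa using hb
          · positivity
      _ ≤ r * ∑ k ∈ Finset.range (N + 1), G k / ω k :=
          mul_le_mul_of_nonneg_left step1 (by positivity)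
  · -- Antitone case: use left endpoint of each block
    have hblock : ∀ b, b < M → ε * (1 / ω (b * r))
        ≤ ∑ s ∈ Finset.range r, G (b * r + s) / ω (b * r + s) := by
      intro b hb
      have h1 : ∀ s ∈ Finset.range r, G (b * r + s) * (1 / ω (b * r))
          ≤ G (b * r + s) / ω (b * r + s) := by
        intro s _
        simp only [div_eq_mul_inv, one_mul]
        exact mul_le_mul_of_nonneg_left (inv_anti₀ (hpos _) (hant (Nat.le_add_right _ _))) (hG _)
      calc ε * (1 / ω (b * r))
          ≤ (∑ s ∈ Finset.range r, G (b * r + s)) * (1 / ω (b * r)) :=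
            mul_le_mul_of_nonneg_right (hwinb b hb) (invnn _)
        _ = ∑ s ∈ Finset.range r, G (b * r + s) * (1 / ω (b * r)) := by rw [Finset.sum_mul]
        _ ≤ _ := Finset.sum_le_sum h1
    have hcsum : (S' ω N - 2 * r * (1 + 1 / ω N))
        ≤ r * ∑ b ∈ Finset.range M, 1 / ω (b * r) := by
      have h2 : ∀ b' : ℕ, (∑ s ∈ Finset.range r, 1 / ω (b' * r + s)) ≤ r * (1 / ω ((1 + b') * r)) := by
        intro b'
        have h2a : ∀ s ∈ Finset.range r, 1 / ω (b' * r + s) ≤ 1 / ω ((1 + b') * r) := by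
          intro s hs
          simp only [Finset.mem_range] at hs
          rw [one_div, one_div]
          refine inv_anti₀ (hpos _) (hant ?_)
          have : (1 + b') * r = b' * r + r := by ring
          omega
        calc ∑ s ∈ Finset.range r, 1 / ω (b' * r + s)
            ≤ ∑ _s ∈ Finset.range r, 1 / ω ((1 + b') * r) := Finset.sum_le_sum h2a
          _ = r * (1 / ω ((1 + b') * r)) := by
              rw [Finset.sum_const, Finset.card_range, nsmul_eq_mul]
      have h3 : ∑ k ∈ Finset.range ((M - 1) * r), 1 / ω k
          ≤ ∑ b ∈ Finset.range (M - 1), r * (1 / ω ((1 + b) * r)) := by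
        rw [sum_range_mul' (fun k => 1 / ω k) (M - 1) r]
        exact Finset.sum_le_sum fun b _ => h2 b
      have h4 : S' ω N - 2 * r * (1 / ω N) ≤ ∑ k ∈ Finset.range ((M - 1) * r), 1 / ω k := by
        have hle : (M - 1) * r ≤ N + 1 := by
          calc (M - 1) * r ≤ M * r := Nat.mul_le_mul_right r (by omega)
            _ ≤ N + 1 := hMr
        have hsplit : ∑ k ∈ Finset.range ((M - 1) * r), 1 / ω k
            + ∑ k ∈ Finset.Ico ((M - 1) * r) (N + 1), 1 / ω k = S' ω N :=
          (range_split (fun k => 1 / ω k) ((M - 1) * r) N hle).symm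
        have htail : ∑ k ∈ Finset.Ico ((M - 1) * r) (N + 1), 1 / ω k ≤ 2 * r * (1 / ω N) := by
          have h7 : ∀ k ∈ Finset.Ico ((M - 1) * r) (N + 1), 1 / ω k ≤ 1 / ω N := by
            intro k hk
            simp only [Finset.mem_Ico] at hk
            rw [one_div, one_div]
            exact inv_anti₀ (hpos N) (hant (by omega))
          have hcard : ((Finset.Ico ((M - 1) * r) (N + 1)).card : ℝ) ≤ 2 * r := by
            rw [Nat.card_Ico]
            have hMM : (M - 1) * r + r = M * r := by
              have hM' : M - 1 + 1 = M := by omega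
              calc (M - 1) * r + r = (M - 1 + 1) * r := by ring
                _ = M * r := by rw [hM']
            have hM2 : (M + 1) * r = M * r + r := by ring
            have : N + 1 - (M - 1) * r ≤ 2 * r := by omega
            calc ((N + 1 - (M - 1) * r : ℕ) : ℝ) ≤ ((2 * r : ℕ) : ℝ) := by exact_mod_cast this
              _ = 2 * r := by push_cast; ring
          calc ∑ k ∈ Finset.Ico ((M - 1) * r) (N + 1), 1 / ω k
              ≤ ∑ _k ∈ Finset.Ico ((M - 1) * r) (N + 1), 1 / ω N := Finset.sum_le_sum h7
            _ = (Finset.Ico ((M - 1) * r) (N + 1)).card * (1 / ω N) := by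
                rw [Finset.sum_const, nsmul_eq_mul]
            _ ≤ 2 * r * (1 / ω N) := mul_le_mul_of_nonneg_right hcard (invnn N)
        linarith
      have h5 : ∑ b ∈ Finset.range (M - 1), r * (1 / ω ((1 + b) * r))
          ≤ r * ∑ b ∈ Finset.range M, 1 / ω (b * r) := by
        rw [← Finset.mul_sum]
        refine mul_le_mul_of_nonneg_left ?_ (by positivity)
        have heq : ∑ b ∈ Finset.range (M - 1), 1 / ω ((1 + b) * r)
            = ∑ b ∈ Finset.Ico 1 M, 1 / ω (b * r) := by
          rw [Finset.sum_Ico_eq_sum_range]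
        rw [heq]
        apply Finset.sum_le_sum_of_subset_of_nonneg
        · rw [Finset.range_eq_Ico]; exact Finset.Ico_subset_Ico (by omega) le_rfl
        · intro b _ _; exact invnn _
      have h8 : S' ω N - 2 * r * (1 + 1 / ω N) ≤ S' ω N - 2 * r * (1 / ω N) := by
        have h10 : (0:ℝ) ≤ 2 * r := by positivity
        nlinarith
      linarith
    calc ε * (S' ω N - 2 * r * (1 + 1 / ω N))
        ≤ ε * (r * ∑ b ∈ Finset.range M, 1 / ω (b * r)) :=
          mul_le_mul_of_nonneg_left hcsum hε
      _ = r * ∑ b ∈ Finset.range M, ε * (1 / ω (b * r)) := by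
          rw [Finset.mul_sum, Finset.mul_sum, Finset.mul_sum]
          refine Finset.sum_congr rfl fun b _ => by ring
      _ ≤ r * ∑ b ∈ Finset.range M, ∑ s ∈ Finset.range r, G (b * r + s) / ω (b * r + s) := by
          refine mul_le_mul_of_nonneg_left (Finset.sum_le_sum fun b hb => hblock b ?_) ?_
          · simpa using hb
          · positivity
      _ ≤ r * ∑ k ∈ Finset.range (N + 1), G k / ω k :=
          mul_le_mul_of_nonneg_left step1 (by positivity)




lemma eventual_bounds (ω : ℕ → ℝ) (hω : IsWeight ω) (d : ℕ) :
    ∃ N₀ : ℕ, ∀ N, N₀ ≤ N →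
      (4 * d * (1 + 1 / ω N) ≤ S' ω N) ∧ (∀ j, j ≤ d → ω (N - j) ≤ 2 * ω N) := by
  obtain ⟨hpos, hmono, hω0, hratio, hdiv⟩ := hω
  have hS' : Tendsto (S' ω) atTop atTop := by
    have h1 : Tendsto (fun n => ∑ k ∈ Finset.range n, 1 / ω k) atTop atTop :=
      (not_summable_iff_tendsto_nat_atTop_of_nonneg
        (fun k => le_of_lt (div_pos one_pos (hpos k)))).1 hdiv
    exact h1.comp (tendsto_add_atTop_nat 1)
  have hSnn : ∀ N, 0 ≤ S' ω N :=
    fun N => Finset.sum_nonneg fun k _ => le_of_lt (div_pos one_pos (hpos k))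
  have hEv1 : ∀ᶠ N in atTop, (8 * d : ℝ) ≤ S' ω N := hS'.eventually_ge_atTop _
  have hrat : ∀ᶠ N in atTop, (1/2 : ℝ) ≤ ω N / ω (N - Nat.sqrt N) :=
    hratio.eventually (eventually_ge_nhds (by norm_num : (1/2:ℝ) < 1))
  have hsqrt : ∀ (c : ℕ), ∀ᶠ N in atTop, c ≤ Nat.sqrt N := by
    intro c
    rw [eventually_atTop]
    exact ⟨c * c, fun N hN => Nat.le_sqrt.2 hN⟩
  -- lower bound for S' in terms of the sqrt-window (antitone case)
  have hkey : ∀ N : ℕ, Antitone ω →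
      ((Nat.sqrt N + 1 : ℕ) : ℝ) * (1 / ω (N - Nat.sqrt N)) ≤ S' ω N := by
    intro N hant
    have hsub : Finset.Icc (N - Nat.sqrt N) N ⊆ Finset.range (N + 1) := by
      intro k hk
      simp only [Finset.mem_Icc] at hk
      simp only [Finset.mem_range]
      omega
    have h1 : ∀ k ∈ Finset.Icc (N - Nat.sqrt N) N, 1 / ω (N - Nat.sqrt N) ≤ 1 / ω k := by
      intro k hk
      simp only [Finset.mem_Icc] at hk
      rw [one_div, one_div]
      exact inv_anti₀ (hpos _) (hant hk.1)
    calc ((Nat.sqrt N + 1 : ℕ) : ℝ) * (1 / ω (N - Nat.sqrt N))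
        = ((Finset.Icc (N - Nat.sqrt N) N).card : ℝ) * (1 / ω (N - Nat.sqrt N)) := by
          rw [Nat.card_Icc]
          congr 1
          have := Nat.sqrt_le_self N
          norm_cast
          omega
      _ = ∑ _k ∈ Finset.Icc (N - Nat.sqrt N) N, 1 / ω (N - Nat.sqrt N) := by
          rw [Finset.sum_const, nsmul_eq_mul]
      _ ≤ ∑ k ∈ Finset.Icc (N - Nat.sqrt N) N, 1 / ω k := Finset.sum_le_sum h1
      _ ≤ S' ω N := Finset.sum_le_sum_of_subset_of_nonneg hsub
          (fun k _ _ => le_of_lt (div_pos one_pos (hpos k)))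
  have hEv2 : ∀ᶠ N in atTop, (8 * d : ℝ) ≤ ω N * S' ω N := by
    rcases hmono with hmon | hant
    · refine hEv1.mono fun N h => ?_
      have h1 : (1:ℝ) ≤ ω N := hω0 ▸ hmon (Nat.zero_le N)
      nlinarith [hSnn N]
    · filter_upwards [hrat, hsqrt (16 * d)] with N h1 h2
      have h3 := hkey N hant
      have h4 : (0:ℝ) < ω (N - Nat.sqrt N) := hpos _
      have h5 : (0:ℝ) < ω N := hpos N
      have h6 : ((Nat.sqrt N + 1 : ℕ) : ℝ) ≥ 16 * d + 1 := by
        push_cast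
        have : (16 * d : ℝ) ≤ (Nat.sqrt N : ℝ) := by exact_mod_cast h2
        linarith
      calc (8 * d : ℝ) ≤ (16 * d + 1) * (1/2) := by nlinarith [(show (0:ℝ) ≤ d by positivity)]
        _ ≤ ((Nat.sqrt N + 1 : ℕ) : ℝ) * (ω N / ω (N - Nat.sqrt N)) := by
            have hq : (0:ℝ) ≤ ω N / ω (N - Nat.sqrt N) := le_of_lt (div_pos h5 h4)
            nlinarith
        _ = (((Nat.sqrt N + 1 : ℕ) : ℝ) * (1 / ω (N - Nat.sqrt N))) * ω N := by
            rw [div_eq_mul_inv, one_div]; ring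
        _ ≤ S' ω N * ω N := by
            refine mul_le_mul_of_nonneg_right h3 (le_of_lt h5)
        _ = ω N * S' ω N := by ring
  have hEv3 : ∀ᶠ N in atTop, ∀ j, j ≤ d → ω (N - j) ≤ 2 * ω N := by
    rcases hmono with hmon | hant
    · refine Filter.Eventually.of_forall fun N j _ => ?_
      have := hmon (Nat.sub_le N j)
      have := hpos N
      linarith
    · filter_upwards [hrat, hsqrt d] with N h1 h2 j hj
      have h3 : ω (N - j) ≤ ω (N - Nat.sqrt N) := hant (by omega)
      have h4 : (0:ℝ) < ω (N - Nat.sqrt N) := hpos _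
      have h5 : ω (N - Nat.sqrt N) ≤ 2 * ω N := by
        rw [le_div_iff₀ h4] at h1
        linarith
      linarith
  have hEvAll := (hEv1.and (hEv2.and hEv3))
  rw [eventually_atTop] at hEvAll
  obtain ⟨N₀, hN₀⟩ := hEvAll
  refine ⟨N₀, fun N hN => ?_⟩
  obtain ⟨h1, h2, h3⟩ := hN₀ N hN
  refine ⟨?_, h3⟩
  have h5 : (0:ℝ) < ω N := hpos N
  have h8 : 8 * (d:ℝ) / ω N ≤ S' ω N := by
    rw [div_le_iff₀ h5]
    nlinarith [h2]
  have hexp : 4 * (d:ℝ) * (1 + 1 / ω N) = 4 * d + (8 * d / ω N) / 2 := by ring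
  linarith


/-- Lower bound for the determinant of the Gram matrix `E`. -/
theorem det_lower_bound
    (ω : ℕ → ℝ) (hω : IsWeight ω) (d d₁ : ℕ) (hd₁ : 1 ≤ d₁) (hd : d₁ ≤ d)
    (z : ℕ → ℂ) (hinj : Set.InjOn z (Set.Icc 1 d))
    (hcirc : ∀ i, 1 ≤ i → i ≤ d₁ → ‖z i‖ = 1)
    (hout : ∀ i, d₁ < i → i ≤ d → 1 < ‖z i‖)
    (E : ℕ → Matrix (Fin d) (Fin d) ℂ)
    (hE : ∀ n, E n = Matrix.of fun (l m : Fin d) =>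
      kN ω (n + d) (z ((l : ℕ) + 1)) (z ((m : ℕ) + 1))) :
    ∃ δ : ℝ, 0 < δ ∧ ∀ n : ℕ, ((E n).det).im = 0 ∧
      δ * (S ω (n + d)) ^ d₁ / (ω (n + d)) ^ (d - d₁) *
        ∏ l ∈ Finset.Icc 1 d, ‖z l‖ ^ (2 * (n + d + 1)) ≤ ((E n).det).re := by
  classical
  obtain ⟨hpos, hmono, hω0, hratio, hdiv⟩ := hω
  -- window constants
  have hCex : ∀ i : ℕ, ∃ Ci : ℝ, 1 ≤ Ci ∧ (i < d → ∀ (t : ℕ) (a : Fin (i+1) → ℂ),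
      ‖z (i+1)‖ ^ (2*t) * Complex.normSq (a (Fin.last i)) ≤
        Ci * ∑ s : Fin (i+1), Complex.normSq (∑ j, a j * (z ((j:ℕ)+1)) ^ (t + (s:ℕ)))) := by
    intro i
    by_cases hi : i < d
    · have hinj' : Function.Injective (fun j : Fin (i+1) => z ((j:ℕ)+1)) := by
        intro j j' h
        have hj : ((j:ℕ)+1 : ℕ) ∈ Set.Icc 1 d := ⟨by omega, by have := j.isLt; omega⟩
        have hj' : ((j':ℕ)+1 : ℕ) ∈ Set.Icc 1 d := ⟨by omega, by have := j'.isLt; omega⟩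
        have := hinj hj hj' h
        exact Fin.ext (by omega)
      obtain ⟨Ci, h1, h2⟩ := window (fun j : Fin (i+1) => z ((j:ℕ)+1)) hinj' (Fin.last i)
      refine ⟨Ci, h1, fun _ t a => ?_⟩
      have := h2 t a
      simpa [Fin.val_last] using this
    · exact ⟨1, le_rfl, fun h => absurd h hi⟩
  choose C hC1 hC2 using hCex
  have hCpos : ∀ i, (0:ℝ) < C i := fun i => lt_of_lt_of_le one_pos (hC1 i)
  -- radius bound
  set R : ℝ := (∑ l ∈ Finset.Icc 1 d, ‖z l‖) + 1 with hR
  have hR1 : 1 ≤ R := by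
    rw [hR]
    have : 0 ≤ ∑ l ∈ Finset.Icc 1 d, ‖z l‖ :=
      Finset.sum_nonneg fun l _ => norm_nonneg _
    linarith
  have hRz : ∀ l, 1 ≤ l → l ≤ d → ‖z l‖ ≤ R := by
    intro l h1 h2
    rw [hR]
    have hmem : l ∈ Finset.Icc 1 d := Finset.mem_Icc.2 ⟨h1, h2⟩
    have := Finset.single_le_sum (f := fun l => ‖z l‖)
      (fun l _ => norm_nonneg _) hmem
    linarith
  -- crude upper bound for ω on [0, d)
  set Wmax : ℝ := (∑ k ∈ Finset.range d, ω k) + 1 with hWmax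
  have hWpos : 0 < Wmax := by
    rw [hWmax]
    have : 0 ≤ ∑ k ∈ Finset.range d, ω k := Finset.sum_nonneg fun k _ => (hpos k).le
    linarith
  have hWle : ∀ k, k < d → ω k ≤ Wmax := by
    intro k hk
    rw [hWmax]
    have := Finset.single_le_sum (f := fun k => ω k) (fun k _ => (hpos k).le)
      (Finset.mem_range.2 hk)
    linarith
  -- eventual bounds
  obtain ⟨N₀, hN₀⟩ := eventual_bounds ω ⟨hpos, hmono, hω0, hratio, hdiv⟩ d
  have hS'S : ∀ N, S' ω N = S ω N := fun N => rfl
  have hSpos : ∀ N, 0 < S ω N := by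
    intro N
    rw [← hS'S]
    refine Finset.sum_pos (fun k _ => div_pos one_pos (hpos k)) ⟨0, by simp⟩
  -- the Gram reduction
  have hgram : ∀ n : ℕ, ∀ m : ℕ → ℝ, (∀ i, i < d → 0 < m i) →
      (∀ i, i < d → ∀ x : ℕ → ℂ, m i ≤ ∑ k ∈ Finset.range (n+d+1),
        Complex.normSq (z (i+1) ^ k - ∑ j ∈ Finset.range i, x j * z (j+1) ^ k) / ω k) →
      (E n).det.im = 0 ∧ ∏ i ∈ Finset.range d, m i ≤ (E n).det.re := by
    intro n m hm hdist
    set N := n + d with hN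
    set w : ℕ → Fin (N+1) → ℂ :=
      fun i k => z (i+1) ^ (k:ℕ) * ((Real.sqrt (ω (k:ℕ)) : ℂ))⁻¹ with hw
    have hsqrt_ne : ∀ k : ℕ, (Real.sqrt (ω k) : ℂ) ≠ 0 := by
      intro k
      exact Complex.ofReal_ne_zero.mpr (Real.sqrt_pos.2 (hpos k)).ne'
    have hsq : ∀ k : ℕ, (Real.sqrt (ω k) : ℂ) * (Real.sqrt (ω k) : ℂ) = ((ω k : ℝ) : ℂ) := by
      intro k
      rw [← Complex.ofReal_mul, Real.mul_self_sqrt (hpos k).le]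
    have hEG : E n = Matrix.of fun i j : Fin d =>
        ∑ k : Fin (N+1), w (i:ℕ) k * (starRingEnd ℂ) (w (j:ℕ) k) := by
      rw [hE n]
      ext i j
      simp only [Matrix.of_apply, kN]
      rw [← Fin.sum_univ_eq_sum_range (fun k =>
        (starRingEnd ℂ) (z ((j:ℕ)+1)) ^ k * z ((i:ℕ)+1) ^ k / (ω k : ℂ))]
      refine Finset.sum_congr rfl fun k _ => ?_
      rw [hw]
      simp only [_root_.map_mul, map_pow, map_inv₀, Complex.conj_ofReal]
      rw [div_eq_mul_inv, ← hsq (k:ℕ), mul_inv]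
      ring
    have hQsum : ∀ (i : ℕ) (x : ℕ → ℂ),
        (∑ k : Fin (N+1), Complex.normSq
          (w i k - ∑ j ∈ Finset.range i, x j * w j k))
        = ∑ k ∈ Finset.range (N+1), Complex.normSq
            (z (i+1) ^ k - ∑ j ∈ Finset.range i, x j * z (j+1) ^ k) / ω k := by
      intro i x
      rw [← Fin.sum_univ_eq_sum_range (fun k => Complex.normSq
        (z (i+1) ^ k - ∑ j ∈ Finset.range i, x j * z (j+1) ^ k) / ω k)]
      refine Finset.sum_congr rfl fun k _ => ?_
      have hfac : w i k - ∑ j ∈ Finset.range i, x j * w j k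
          = (z (i+1) ^ (k:ℕ) - ∑ j ∈ Finset.range i, x j * z (j+1) ^ (k:ℕ))
            * ((Real.sqrt (ω (k:ℕ)) : ℂ))⁻¹ := by
        rw [hw, sub_mul, Finset.sum_mul]
        simp only []
        congr 1
        exact Finset.sum_congr rfl fun j _ => by ring
      rw [hfac, Complex.normSq_mul, Complex.normSq_inv]
      have : Complex.normSq ((Real.sqrt (ω (k:ℕ)) : ℂ)) = ω (k:ℕ) := by
        rw [Complex.normSq_ofReal, Real.mul_self_sqrt (hpos _).le]
      rw [this, div_eq_mul_inv]
    obtain ⟨him, hre⟩ := gram_det_ge (N+1) w m d hm (by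
      intro i hi x
      rw [hQsum i x]
      exact hdist i hi x)
    rw [hEG]
    exact ⟨him, hre⟩
  -- window consequence in range form
  have hwindow : ∀ (i : ℕ), i < d → ∀ (x : ℕ → ℂ) (t : ℕ),
      ‖z (i+1)‖ ^ (2*t) / C i ≤ ∑ s ∈ Finset.range (i+1),
        Complex.normSq (z (i+1) ^ (t+s) - ∑ j ∈ Finset.range i, x j * z (j+1) ^ (t+s)) := by
    intro i hi x t
    set a : Fin (i+1) → ℂ := fun j => if (j:ℕ) = i then 1 else -(x (j:ℕ)) with ha
    have ha_last : a (Fin.last i) = 1 := by rw [ha]; simp [Fin.val_last]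
    have hsum_a : ∀ k : ℕ, (∑ j : Fin (i+1), a j * z ((j:ℕ)+1) ^ k)
        = z (i+1) ^ k - ∑ j ∈ Finset.range i, x j * z (j+1) ^ k := by
      intro k
      rw [Fin.sum_univ_castSucc]
      have h1 : a (Fin.last i) * z ((Fin.last i : ℕ)+1) ^ k = z (i+1) ^ k := by
        rw [ha_last, Fin.val_last, one_mul]
      have h2 : ∀ j : Fin i, a j.castSucc * z ((j.castSucc : ℕ)+1) ^ k
          = -(x (j:ℕ) * z ((j:ℕ)+1) ^ k) := by
        intro j
        rw [ha]
        simp only [Fin.coe_castSucc]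
        rw [if_neg (by have := j.isLt; omega : ¬ ((j:ℕ) = i))]
        ring
      rw [h1, Finset.sum_congr rfl (fun j _ => h2 j), Finset.sum_neg_distrib,
        ← Fin.sum_univ_eq_sum_range (fun j => x j * z (j+1) ^ k) i]
      ring
    have key := hC2 i hi t a
    have hfin : (∑ s : Fin (i+1), Complex.normSq (∑ j, a j * z ((j:ℕ)+1) ^ (t + (s:ℕ))))
        = ∑ s ∈ Finset.range (i+1), Complex.normSq
            (z (i+1) ^ (t+s) - ∑ j ∈ Finset.range i, x j * z (j+1) ^ (t+s)) := by
      rw [← Fin.sum_univ_eq_sum_range (fun s => Complex.normSq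
        (z (i+1) ^ (t+s) - ∑ j ∈ Finset.range i, x j * z (j+1) ^ (t+s))) (i+1)]
      exact Finset.sum_congr rfl fun s _ => by rw [hsum_a (t + (s:ℕ))]
    rw [ha_last, Complex.normSq_one, mul_one, hfin] at key
    rw [div_le_iff₀ (hCpos i)]
    exact key.trans_eq (mul_comm _ _)
  -- base (uniform) distance bound
  have hdistBase : ∀ (n i : ℕ), i < d → ∀ x : ℕ → ℂ,
      1 / (C i * Wmax) ≤ ∑ k ∈ Finset.range (n+d+1),
        Complex.normSq (z (i+1) ^ k - ∑ j ∈ Finset.range i, x j * z (j+1) ^ k) / ω k := by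
    intro n i hi x
    set G : ℕ → ℝ := fun k =>
      Complex.normSq (z (i+1) ^ k - ∑ j ∈ Finset.range i, x j * z (j+1) ^ k) with hGdef
    have hGnn : ∀ k, 0 ≤ G k := fun k => Complex.normSq_nonneg _
    have h0 := hwindow i hi x 0
    simp only [Nat.mul_zero, pow_zero, zero_add] at h0
    -- h0 : 1 / C i ≤ ∑ s ∈ range (i+1), G s
    have hsub : ∑ k ∈ Finset.range (i+1), G k / ω k
        ≤ ∑ k ∈ Finset.range (n+d+1), G k / ω k := by
      apply Finset.sum_le_sum_of_subset_of_nonneg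
      · exact Finset.range_subset_range.2 (by omega)
      · intro k _ _; exact div_nonneg (hGnn k) (hpos k).le
    have hterm : ∀ k ∈ Finset.range (i+1), G k * (1/Wmax) ≤ G k / ω k := by
      intro k hk
      simp only [Finset.mem_range] at hk
      calc G k * (1/Wmax) ≤ G k * (1/ω k) :=
            mul_le_mul_of_nonneg_left
              (one_div_le_one_div_of_le (hpos k) (hWle k (by omega))) (hGnn k)
        _ = G k / ω k := mul_one_div _ _
    calc 1 / (C i * Wmax) = (1 / C i) * (1 / Wmax) := by rw [one_div_mul_one_div]
      _ ≤ (∑ s ∈ Finset.range (i+1), G s) * (1 / Wmax) :=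
          mul_le_mul_of_nonneg_right h0 (le_of_lt (div_pos one_pos hWpos))
      _ = ∑ k ∈ Finset.range (i+1), G k * (1 / Wmax) := by rw [Finset.sum_mul]
      _ ≤ ∑ k ∈ Finset.range (i+1), G k / ω k := Finset.sum_le_sum hterm
      _ ≤ _ := hsub
  -- circle-point distance bound
  have hdistCircle : ∀ (n i : ℕ), i < d₁ → N₀ ≤ n + d → ∀ x : ℕ → ℂ,
      S ω (n+d) / (2*(d:ℝ)*C i) ≤ ∑ k ∈ Finset.range (n+d+1),
        Complex.normSq (z (i+1) ^ k - ∑ j ∈ Finset.range i, x j * z (j+1) ^ k) / ω k := by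
    intro n i hi hn x
    have hid : i < d := lt_of_lt_of_le hi hd
    set G : ℕ → ℝ := fun k =>
      Complex.normSq (z (i+1) ^ k - ∑ j ∈ Finset.range i, x j * z (j+1) ^ k) with hGdef
    have hGnn : ∀ k, 0 ≤ G k := fun k => Complex.normSq_nonneg _
    have habs : ‖z (i+1)‖ = 1 := hcirc (i+1) (by omega) (by omega)
    have hwin' : ∀ t, t + (i+1) ≤ (n+d) + 1 →
        1 / C i ≤ ∑ s ∈ Finset.range (i+1), G (t+s) := by
      intro t _
      have := hwindow i hid x t
      rwa [habs, one_pow] at this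
    have hb := blocks_ge ω hpos hmono hω0 G hGnn (n+d) (i+1) (by omega) (by omega)
      (1 / C i) (le_of_lt (div_pos one_pos (hCpos i))) hwin'
    obtain ⟨hE1, _⟩ := hN₀ (n+d) hn
    rw [hS'S] at hb
    set Sg0 : ℝ := ∑ k ∈ Finset.range (n+d+1), G k / ω k with hSg0
    have hSgnn : 0 ≤ Sg0 :=
      Finset.sum_nonneg fun k _ => div_nonneg (hGnn k) (hpos k).le
    have hu : (0:ℝ) < 1 + 1 / ω (n+d) := by
      have := div_pos one_pos (hpos (n+d)); linarith
    have hled : ((i+1:ℕ):ℝ) ≤ (d:ℝ) := by exact_mod_cast hid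
    have hd0 : (0:ℝ) < (d:ℝ) := by exact_mod_cast (by omega : 0 < d)
    rw [hS'S] at hE1
    have h1 : 2*((i+1:ℕ):ℝ)*(1+1/ω (n+d)) ≤ S ω (n+d) / 2 := by
      have h1a := mul_le_mul_of_nonneg_right
        (show 2*((i+1:ℕ):ℝ) ≤ 2*(d:ℝ) by linarith) hu.le
      linarith
    have h2 : (1/C i) * (S ω (n+d)/2) ≤ ((i+1:ℕ):ℝ) * Sg0 := by
      have h2a : S ω (n+d)/2 ≤ S ω (n+d) - 2*((i+1:ℕ):ℝ)*(1+1/ω (n+d)) := by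
        push_cast at h1 ⊢
        linarith
      calc (1/C i) * (S ω (n+d)/2)
          ≤ (1/C i) * (S ω (n+d) - 2*((i+1:ℕ):ℝ)*(1+1/ω (n+d))) :=
            mul_le_mul_of_nonneg_left h2a (le_of_lt (div_pos one_pos (hCpos i)))
        _ ≤ ((i+1:ℕ):ℝ) * Sg0 := by
            push_cast
            push_cast at hb
            linarith
    have h3 : S ω (n+d)/2 ≤ C i * (((i+1:ℕ):ℝ) * Sg0) := by
      have h3a := mul_le_mul_of_nonneg_left h2 (hCpos i).le
      rwa [show C i * ((1/C i) * (S ω (n+d)/2)) = S ω (n+d)/2 from by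
        rw [← mul_assoc, mul_one_div_cancel (hCpos i).ne', one_mul]] at h3a
    have h4 : C i * (((i+1:ℕ):ℝ) * Sg0) ≤ C i * ((d:ℝ) * Sg0) :=
      mul_le_mul_of_nonneg_left (mul_le_mul_of_nonneg_right hled hSgnn) (hCpos i).le
    rw [div_le_iff₀ (mul_pos (mul_pos two_pos hd0) (hCpos i))]
    calc S ω (n+d) ≤ 2 * (C i * ((d:ℝ) * Sg0)) := by linarith
      _ = Sg0 * (2*(d:ℝ)*C i) := by ring
  -- outer-point distance bound
  have hdistOut : ∀ (n i : ℕ), d₁ ≤ i → i < d → N₀ ≤ n + d → ∀ x : ℕ → ℂ,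
      ‖z (i+1)‖ ^ (2*(n+d+1)) / (2*C i*R^(2*d)*ω (n+d))
        ≤ ∑ k ∈ Finset.range (n+d+1),
          Complex.normSq (z (i+1) ^ k - ∑ j ∈ Finset.range i, x j * z (j+1) ^ k) / ω k := by
    intro n i hi1 hi2 hn x
    set G : ℕ → ℝ := fun k =>
      Complex.normSq (z (i+1) ^ k - ∑ j ∈ Finset.range i, x j * z (j+1) ^ k) with hGdef
    have hGnn : ∀ k, 0 ≤ G k := fun k => Complex.normSq_nonneg _
    set N := n + d with hNd
    have hiN : i < N := by omega
    obtain ⟨_, hE2⟩ := hN₀ N hn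
    have hwt := hwindow i hi2 x (N - i)
    set Sg0 : ℝ := ∑ k ∈ Finset.range (N+1), G k / ω k with hSg0
    have hIco : ∑ k ∈ Finset.Ico (N-i) (N+1), G k / ω k ≤ Sg0 := by
      apply Finset.sum_le_sum_of_subset_of_nonneg
      · intro k hk
        simp only [Finset.mem_Ico] at hk
        simp only [Finset.mem_range]
        omega
      · intro k _ _; exact div_nonneg (hGnn k) (hpos k).le
    have hterm : ∀ k ∈ Finset.Ico (N-i) (N+1), G k * (1/(2*ω N)) ≤ G k / ω k := by
      intro k hk
      simp only [Finset.mem_Ico] at hk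
      have hwk2 : ω k ≤ 2 * ω N := by
        have := hE2 (N - k) (by omega)
        have hNk : N - (N - k) = k := by omega
        rwa [hNk] at this
      calc G k * (1/(2*ω N)) ≤ G k * (1/ω k) :=
            mul_le_mul_of_nonneg_left
              (one_div_le_one_div_of_le (hpos k) hwk2) (hGnn k)
        _ = G k / ω k := mul_one_div _ _
    have hsum2 : ∑ k ∈ Finset.Ico (N-i) (N+1), G k
        = ∑ s ∈ Finset.range (i+1), G ((N-i)+s) := by
      rw [Finset.sum_Ico_eq_sum_range]
      exact Finset.sum_congr (by congr 1; omega) fun s _ => rfl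
    have hmain : ‖z (i+1)‖ ^ (2*(N-i)) / C i * (1/(2*ω N)) ≤ Sg0 := by
      calc ‖z (i+1)‖ ^ (2*(N-i)) / C i * (1/(2*ω N))
          ≤ (∑ s ∈ Finset.range (i+1), G ((N-i)+s)) * (1/(2*ω N)) := by
            refine mul_le_mul_of_nonneg_right hwt ?_
            exact le_of_lt (div_pos one_pos (mul_pos two_pos (hpos N)))
        _ = ∑ k ∈ Finset.Ico (N-i) (N+1), G k * (1/(2*ω N)) := by
            rw [← hsum2, Finset.sum_mul]
        _ ≤ ∑ k ∈ Finset.Ico (N-i) (N+1), G k / ω k := Finset.sum_le_sum hterm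
        _ ≤ Sg0 := hIco
    refine le_trans ?_ hmain
    -- |z|^{2(N+1)} / (2 C R^{2d} ω) ≤ |z|^{2(N-i)}/C * (1/(2ω))
    have hzpos : (0:ℝ) < ‖z (i+1)‖ :=
      lt_trans one_pos (hout (i+1) (by omega) (by omega))
    have hzR : ‖z (i+1)‖ ≤ R := hRz (i+1) (by omega) (by omega)
    have hpow : ‖z (i+1)‖ ^ (2*(N+1))
        ≤ ‖z (i+1)‖ ^ (2*(N-i)) * R^(2*d) := by
      have hsplit : 2*(N+1) = 2*(N-i) + 2*(i+1) := by omega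
      rw [hsplit, pow_add]
      refine mul_le_mul_of_nonneg_left ?_ (pow_nonneg hzpos.le _)
      calc ‖z (i+1)‖ ^ (2*(i+1)) ≤ R ^ (2*(i+1)) :=
          pow_le_pow_left₀ hzpos.le hzR _
        _ ≤ R ^ (2*d) := pow_le_pow_right₀ hR1 (by omega)
    have hRpos : (0:ℝ) < R := lt_of_lt_of_le one_pos hR1
    have hden1 : (0:ℝ) < 2*C i*R^(2*d)*ω N :=
      mul_pos (mul_pos (mul_pos two_pos (hCpos i)) (pow_pos hRpos _)) (hpos N)
    have hden2 : (0:ℝ) < 2*C i*ω N := mul_pos (mul_pos two_pos (hCpos i)) (hpos N)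
    have heq : ‖z (i+1)‖ ^ (2*(N-i)) / C i * (1/(2*ω N))
        = ‖z (i+1)‖ ^ (2*(N-i)) / (2 * C i * ω N) := by
      rw [div_mul_div_comm, mul_one]
      congr 1
      ring
    rw [heq, div_le_div_iff₀ hden1 hden2]
    calc ‖z (i+1)‖ ^ (2*(N+1)) * (2 * C i * ω N)
        ≤ (‖z (i+1)‖ ^ (2*(N-i)) * R^(2*d)) * (2 * C i * ω N) :=
          mul_le_mul_of_nonneg_right hpow hden2.le
      _ = ‖z (i+1)‖ ^ (2*(N-i)) * (2*C i*R^(2*d)*ω N) := by ring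
  -- instantiate the Gram bound with the two choices of m
  have hsmall : ∀ n, (E n).det.im = 0 ∧
      (∏ i ∈ Finset.range d, 1/(C i * Wmax)) ≤ (E n).det.re :=
    fun n => hgram n (fun i => 1/(C i * Wmax))
      (fun i _ => div_pos one_pos (mul_pos (hCpos i) hWpos))
      (fun i hi x => hdistBase n i hi x)
  set mBig : ℕ → ℕ → ℝ := fun n i =>
    if i < d₁ then S ω (n+d) / (2*(d:ℝ)*C i)
    else ‖z (i+1)‖ ^ (2*(n+d+1)) / (2*C i*R^(2*d)*ω (n+d)) with hmBig
  have hd0 : (0:ℝ) < (d:ℝ) := by exact_mod_cast (by omega : 0 < d)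
  have hRpos : (0:ℝ) < R := lt_of_lt_of_le one_pos hR1
  have hzpos : ∀ l, 1 ≤ l → l ≤ d → (0:ℝ) < ‖z l‖ := by
    intro l h1 h2
    rcases le_or_gt l d₁ with hc | hc
    · rw [hcirc l h1 hc]; exact one_pos
    · exact lt_trans one_pos (hout l hc h2)
  have hmBigpos : ∀ n i, i < d → 0 < mBig n i := by
    intro n i hi
    by_cases hc : i < d₁
    · simp only [hmBig, if_pos hc]
      exact div_pos (hSpos (n+d)) (mul_pos (mul_pos two_pos hd0) (hCpos i))
    · simp only [hmBig, if_neg hc]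
      exact div_pos (pow_pos (hzpos (i+1) (by omega) (by omega)) _)
        (mul_pos (mul_pos (mul_pos two_pos (hCpos i)) (pow_pos hRpos _)) (hpos (n+d)))
  have hbig : ∀ n, N₀ ≤ n + d →
      ∏ i ∈ Finset.range d, mBig n i ≤ (E n).det.re := by
    intro n hn
    refine (hgram n (mBig n) (fun i hi => hmBigpos n i hi) ?_).2
    intro i hi x
    by_cases hc : i < d₁
    · simp only [hmBig, if_pos hc]
      exact hdistCircle n i hc hn x
    · simp only [hmBig, if_neg hc]
      exact hdistOut n i (by omega) hi hn x
  -- the constant c₁ and the product identity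
  set c₁ : ℝ := (∏ i ∈ Finset.range d₁, 1/(2*(d:ℝ)*C i))
      * ∏ i ∈ Finset.Ico d₁ d, 1/(2*C i*R^(2*d)) with hc₁
  have hc₁pos : 0 < c₁ := by
    rw [hc₁]
    refine mul_pos (Finset.prod_pos fun i _ => ?_) (Finset.prod_pos fun i _ => ?_)
    · exact div_pos one_pos (mul_pos (mul_pos two_pos hd0) (hCpos i))
    · exact div_pos one_pos (mul_pos (mul_pos two_pos (hCpos i)) (pow_pos hRpos _))
  have hIcc : ∀ e : ℕ, ∏ l ∈ Finset.Icc 1 d, ‖z l‖ ^ e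
      = ∏ i ∈ Finset.Ico d₁ d, ‖z (i+1)‖ ^ e := by
    intro e
    have h1 : Finset.Icc 1 d = Finset.Ico 1 (d+1) := by rw [Finset.Ico_add_one_right_eq_Icc]
    rw [h1, ← Finset.prod_Ico_consecutive (fun l => ‖z l‖ ^ e)
      (show 1 ≤ d₁+1 by omega) (show d₁+1 ≤ d+1 by omega)]
    have h2 : ∏ l ∈ Finset.Ico 1 (d₁+1), ‖z l‖ ^ e = 1 := by
      refine Finset.prod_eq_one fun l hl => ?_
      simp only [Finset.mem_Ico] at hl
      rw [hcirc l (by omega) (by omega), one_pow]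
    have h3 : ∏ l ∈ Finset.Ico (d₁+1) (d+1), ‖z l‖ ^ e
        = ∏ i ∈ Finset.Ico d₁ d, ‖z (i+1)‖ ^ e := by
      rw [Finset.prod_Ico_eq_prod_range, Finset.prod_Ico_eq_prod_range]
      refine Finset.prod_congr (by congr 1; omega) fun i _ => ?_
      have : d₁ + 1 + i = d₁ + i + 1 := by omega
      rw [this]
    rw [h2, h3, one_mul]
  have hprodBig : ∀ n, ∏ i ∈ Finset.range d, mBig n i
      = c₁ * ((S ω (n+d)) ^ d₁ / (ω (n+d)) ^ (d - d₁)
          * ∏ l ∈ Finset.Icc 1 d, ‖z l‖ ^ (2*(n+d+1))) := by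
    intro n
    have hsplitP : ∏ i ∈ Finset.range d, mBig n i
        = (∏ i ∈ Finset.range d₁, mBig n i) * ∏ i ∈ Finset.Ico d₁ d, mBig n i := by
      exact (Finset.prod_range_mul_prod_Ico (mBig n) hd).symm
    have hP1 : ∏ i ∈ Finset.range d₁, mBig n i
        = (S ω (n+d)) ^ d₁ * ∏ i ∈ Finset.range d₁, 1/(2*(d:ℝ)*C i) := by
      have : ∀ i ∈ Finset.range d₁, mBig n i = S ω (n+d) * (1/(2*(d:ℝ)*C i)) := by
        intro i hi
        simp only [Finset.mem_range] at hi
        simp only [hmBig, if_pos hi]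
        rw [mul_one_div]
      rw [Finset.prod_congr rfl this, Finset.prod_mul_distrib, Finset.prod_const,
        Finset.card_range]
    have hP2 : ∏ i ∈ Finset.Ico d₁ d, mBig n i
        = (∏ i ∈ Finset.Ico d₁ d, ‖z (i+1)‖ ^ (2*(n+d+1)))
          * (1 / ω (n+d)) ^ (d - d₁) * ∏ i ∈ Finset.Ico d₁ d, 1/(2*C i*R^(2*d)) := by
      have : ∀ i ∈ Finset.Ico d₁ d, mBig n i
          = ‖z (i+1)‖ ^ (2*(n+d+1)) * (1 / ω (n+d)) * (1/(2*C i*R^(2*d))) := by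
        intro i hi
        simp only [Finset.mem_Ico] at hi
        simp only [hmBig, if_neg (by omega : ¬ i < d₁)]
        rw [one_div, one_div, mul_inv, ← mul_assoc]
        rw [div_eq_mul_inv, mul_inv, mul_inv]
        ring
      rw [Finset.prod_congr rfl this, Finset.prod_mul_distrib, Finset.prod_mul_distrib,
        Finset.prod_const, Nat.card_Ico]
    rw [hsplitP, hP1, hP2, hIcc (2*(n+d+1)), hc₁]
    ring
  -- the final constant δ
  set Pf : ℕ → ℝ := fun n => (S ω (n+d)) ^ d₁ / (ω (n+d)) ^ (d - d₁)
      * ∏ l ∈ Finset.Icc 1 d, ‖z l‖ ^ (2*(n+d+1)) with hPf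
  have hPpos : ∀ n, 0 < Pf n := by
    intro n
    rw [hPf]
    refine mul_pos (div_pos (pow_pos (hSpos (n+d)) _) (pow_pos (hpos (n+d)) _))
      (Finset.prod_pos fun l hl => ?_)
    simp only [Finset.mem_Icc] at hl
    exact pow_pos (hzpos l hl.1 hl.2) _
  set μ : ℝ := ∏ i ∈ Finset.range d, 1/(C i * Wmax) with hμ
  have hμpos : 0 < μ := by
    rw [hμ]
    exact Finset.prod_pos fun i _ => div_pos one_pos (mul_pos (hCpos i) hWpos)
  set T : Finset ℝ := insert c₁ ((Finset.range N₀).image fun n => μ / Pf n) with hT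
  have hTne : T.Nonempty := ⟨c₁, Finset.mem_insert_self _ _⟩
  set δ : ℝ := T.min' hTne with hδ
  have hδpos : 0 < δ := by
    rw [hδ, Finset.lt_min'_iff]
    intro b hb
    rw [hT, Finset.mem_insert] at hb
    rcases hb with hb | hb
    · rw [hb]; exact hc₁pos
    · obtain ⟨n, _, hn2⟩ := Finset.mem_image.1 hb
      rw [← hn2]
      exact div_pos hμpos (hPpos n)
  refine ⟨δ, hδpos, fun n => ?_⟩
  refine ⟨(hsmall n).1, ?_⟩
  have hgoal_eq : δ * (S ω (n + d)) ^ d₁ / (ω (n + d)) ^ (d - d₁) *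
      ∏ l ∈ Finset.Icc 1 d, ‖z l‖ ^ (2 * (n + d + 1)) = δ * Pf n := by
    rw [hPf]
    ring
  rw [hgoal_eq]
  by_cases hn : N₀ ≤ n + d
  · have hδ1 : δ ≤ c₁ := Finset.min'_le _ _ (Finset.mem_insert_self _ _)
    calc δ * Pf n ≤ c₁ * Pf n := mul_le_mul_of_nonneg_right hδ1 (hPpos n).le
      _ = ∏ i ∈ Finset.range d, mBig n i := by rw [hprodBig n, hPf]
      _ ≤ (E n).det.re := hbig n hn
  · have hn' : n < N₀ := by omega
    have hδ2 : δ ≤ μ / Pf n := Finset.min'_le _ _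
      (Finset.mem_insert_of_mem (Finset.mem_image_of_mem _ (Finset.mem_range.2 hn')))
    calc δ * Pf n ≤ (μ / Pf n) * Pf n := mul_le_mul_of_nonneg_right hδ2 (hPpos n).le
      _ = μ := div_mul_cancel₀ _ (hPpos n).ne'
      _ ≤ (E n).det.re := (hsmall n).2

end
end

section
/- Let d ≥ 2 and let z₂,…,z_d ∈ ℂ ∖ closure(𝔻) be distinct. Then the d×d determinant G = det [[1, v],[sᵗ, B]] is nonzero, where v = (v_m)_{m=2}^d with v_m = 1/z̄_m, B = (b_{l,m})_{l,m=2}^d with b_{l,m} = 1/(z̄_m z_l − 1), and s = (s_l)_{l=2}^d with s_l = 1/(z_l − 1). -/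
open Polynomial Filter Topology MeasureTheory Metric Asymptotics

noncomputable section

/-- The determinant `G` is nonzero when the extra zeros are outside the closed disk. -/
theorem G_nonzero (d : ℕ) (hd : 2 ≤ d) (z : ℕ → ℂ)
    (hinj : Set.InjOn z (Set.Icc 2 d))
    (hout : ∀ l, 2 ≤ l → l ≤ d → 1 < ‖z l‖) :
    Matrix.det (Matrix.of fun i j : Fin d =>
      if (i : ℕ) = 0 then
        (if (j : ℕ) = 0 then 1 else 1 / starRingEnd ℂ (z ((j : ℕ) + 1)))
      else
        (if (j : ℕ) = 0 then 1 / (z ((i : ℕ) + 1) - 1)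
         else 1 / (starRingEnd ℂ (z ((j : ℕ) + 1)) * z ((i : ℕ) + 1) - 1))) ≠ 0 := by
  classical
  have hd0 : 0 < d := by omega
  haveI : NeZero d := ⟨by omega⟩
  set M : Matrix (Fin d) (Fin d) ℂ := Matrix.of fun i j : Fin d =>
      if (i : ℕ) = 0 then
        (if (j : ℕ) = 0 then 1 else 1 / starRingEnd ℂ (z ((j : ℕ) + 1)))
      else
        (if (j : ℕ) = 0 then 1 / (z ((i : ℕ) + 1) - 1)
         else 1 / (starRingEnd ℂ (z ((j : ℕ) + 1)) * z ((i : ℕ) + 1) - 1)) with hMdef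
  intro hdet
  obtain ⟨c, hc, hMc⟩ := Matrix.exists_mulVec_eq_zero_iff.mpr hdet
  -- basic ranges
  have hrange : ∀ i : Fin d, i ≠ 0 → 2 ≤ (i : ℕ) + 1 ∧ (i : ℕ) + 1 ≤ d := by
    intro i hi
    have h1 : (i : ℕ) ≠ 0 := fun h => hi (Fin.ext (by simpa using h))
    have h2 : (i : ℕ) < d := i.isLt
    omega
  have habs : ∀ i : Fin d, i ≠ 0 → 1 < ‖z ((i : ℕ) + 1)‖ := by
    intro i hi
    obtain ⟨h1, h2⟩ := hrange i hi
    exact hout _ h1 h2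
  -- the b points
  set b : Fin d → ℂ := fun i => z ((i : ℕ) + 1) with hbdef
  have hbabs : ∀ i : Fin d, i ≠ 0 → 1 < ‖b i‖ := habs
  have hbinj : ∀ i i' : Fin d, i ≠ 0 → i' ≠ 0 → b i = b i' → i = i' := by
    intro i i' hi hi' h
    obtain ⟨h1, h2⟩ := hrange i hi
    obtain ⟨h1', h2'⟩ := hrange i' hi'
    have := hinj ⟨h1, h2⟩ ⟨h1', h2'⟩ h
    exact Fin.ext (by omega)
  -- the L coefficients
  set L : Fin d → ℂ := fun j => if j = 0 then 1 else starRingEnd ℂ (z ((j : ℕ) + 1)) with hLdef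
  have hLabs : ∀ j : Fin d, 1 ≤ ‖L j‖ := by
    intro j
    by_cases hj : j = 0
    · simp [hLdef, hj]
    · simp only [hLdef, if_neg hj, Complex.norm_conj]
      exact (habs j hj).le
  have hLne : ∀ j : Fin d, L j ≠ 0 := by
    intro j h
    have := hLabs j
    rw [h] at this
    norm_num at this
  have hLinj : Function.Injective L := by
    intro j j' h
    by_cases hj : j = 0 <;> by_cases hj' : j' = 0
    · rw [hj, hj']
    · exfalso
      have : ‖L j'‖ = 1 := by rw [← h, hLdef]; simp [hj]
      have h2 : ‖L j'‖ > 1 := by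
        simp only [hLdef, if_neg hj', Complex.norm_conj]; exact habs j' hj'
      linarith
    · exfalso
      have : ‖L j‖ = 1 := by rw [h, hLdef]; simp [hj']
      have h2 : ‖L j‖ > 1 := by
        simp only [hLdef, if_neg hj, Complex.norm_conj]; exact habs j hj
      linarith
    · simp only [hLdef, if_neg hj, if_neg hj'] at h
      have hz : z ((j : ℕ) + 1) = z ((j' : ℕ) + 1) := by
        have := congrArg (starRingEnd ℂ) h
        simpa using this
      obtain ⟨h1, h2⟩ := hrange j hj
      obtain ⟨h1', h2'⟩ := hrange j' hj'
      have := hinj ⟨h1, h2⟩ ⟨h1', h2'⟩ hz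
      exact Fin.ext (by omega)
  -- linear polynomials
  set D : Fin d → Polynomial ℂ := fun j => Polynomial.C (L j) * Polynomial.X - Polynomial.C 1
    with hDdef
  have hDform : ∀ j, D j = Polynomial.C (L j) * Polynomial.X + Polynomial.C (-1) := by
    intro j; simp [hDdef, sub_eq_add_neg]
  have hDdeg : ∀ j, (D j).natDegree = 1 := by
    intro j; rw [hDform j]; exact Polynomial.natDegree_linear (hLne j)
  have hDlead : ∀ j, (D j).leadingCoeff = L j := by
    intro j; rw [hDform j]; exact Polynomial.leadingCoeff_linear (hLne j)
  have hDne : ∀ j, D j ≠ 0 := by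
    intro j h
    have := hDdeg j
    rw [h] at this
    simp at this
  have hDeval : ∀ j x, (D j).eval x = L j * x - 1 := by
    intro j x; simp [hDdef]
  -- the polynomial N
  set N : Polynomial ℂ :=
    ∑ j : Fin d, Polynomial.C (c j) * ∏ j' ∈ Finset.univ.erase j, D j' with hNdef
  have hcard_erase : ∀ j : Fin d, (Finset.univ.erase j).card = d - 1 := by
    intro j
    rw [Finset.card_erase_of_mem (Finset.mem_univ j)]
    simp
  have hprodDeg : ∀ j : Fin d, (∏ j' ∈ Finset.univ.erase j, D j').natDegree = d - 1 := by
    intro j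
    rw [Polynomial.natDegree_prod _ _ (fun j' _ => hDne j')]
    rw [Finset.sum_congr rfl (fun j' _ => hDdeg j')]
    simp [hcard_erase j]
  -- evaluation of N
  have hNeval : ∀ x : ℂ, N.eval x =
      ∑ j : Fin d, c j * ∏ j' ∈ Finset.univ.erase j, (L j' * x - 1) := by
    intro x
    rw [hNdef, Polynomial.eval_finset_sum]
    refine Finset.sum_congr rfl fun j _ => ?_
    rw [Polynomial.eval_mul, Polynomial.eval_C, Polynomial.eval_prod]
    congr 1
    exact Finset.prod_congr rfl fun j' _ => hDeval j' x
  -- the row equations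
  have hrow : ∀ i : Fin d, ∑ j : Fin d, M i j * c j = 0 := by
    intro i
    have := congrFun hMc i
    simpa [Matrix.mulVec, dotProduct] using this
  -- entries of M
  have hM0 : ∀ j : Fin d, M 0 j = 1 / L j := by
    intro j
    by_cases hj : j = 0
    · simp [hMdef, hj, hLdef]
    · have hjv : (j : ℕ) ≠ 0 := fun h => hj (Fin.ext (by simpa using h))
      simp [hMdef, hLdef, hjv, hj, Fin.val_zero]
  have hMi : ∀ i : Fin d, i ≠ 0 → ∀ j : Fin d, M i j = 1 / (L j * b i - 1) := by
    intro i hi j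
    have hiv : (i : ℕ) ≠ 0 := fun h => hi (Fin.ext (by simpa using h))
    by_cases hj : j = 0
    · simp [hMdef, hj, hiv, hi, hLdef, hbdef]
    · have hjv : (j : ℕ) ≠ 0 := fun h => hj (Fin.ext (by simpa using h))
      simp [hMdef, hiv, hjv, hj, hi, hLdef, hbdef]
  -- denominators nonzero at b i
  have hDen : ∀ i : Fin d, i ≠ 0 → ∀ j : Fin d, L j * b i - 1 ≠ 0 := by
    intro i hi j h
    have h1 : L j * b i = 1 := by linear_combination h
    have := congrArg (norm : ℂ → ℝ) h1
    rw [norm_mul, norm_one] at this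
    have hb := hbabs i hi
    have hL := hLabs j
    nlinarith [norm_nonneg (L j), norm_nonneg (b i)]
  -- N vanishes at b i for i ≠ 0
  have hNroot : ∀ i : Fin d, i ≠ 0 → N.eval (b i) = 0 := by
    intro i hi
    rw [hNeval]
    have key : ∀ j : Fin d, ∏ j' ∈ Finset.univ.erase j, (L j' * b i - 1)
        = (L j * b i - 1)⁻¹ * ∏ j' : Fin d, (L j' * b i - 1) := by
      intro j
      rw [← Finset.mul_prod_erase Finset.univ _ (Finset.mem_univ j)]
      rw [inv_mul_cancel_left₀ (hDen i hi j)]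
    calc ∑ j : Fin d, c j * ∏ j' ∈ Finset.univ.erase j, (L j' * b i - 1)
        = (∏ j' : Fin d, (L j' * b i - 1)) * ∑ j : Fin d, M i j * c j := by
          rw [Finset.mul_sum]
          refine Finset.sum_congr rfl fun j _ => ?_
          rw [key j, hMi i hi j]
          field_simp
      _ = 0 := by rw [hrow i]; ring
  -- top coefficient of N vanishes
  have htop : N.coeff (d - 1) = 0 := by
    have hco : ∀ j : Fin d, (Polynomial.C (c j) * ∏ j' ∈ Finset.univ.erase j, D j').coeff (d-1)
        = c j * ∏ j' ∈ Finset.univ.erase j, L j' := by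
      intro j
      rw [Polynomial.coeff_C_mul]
      congr 1
      have h1 : (∏ j' ∈ Finset.univ.erase j, D j').coeff (d - 1)
          = (∏ j' ∈ Finset.univ.erase j, D j').leadingCoeff := by
        rw [Polynomial.leadingCoeff, hprodDeg j]
      rw [h1, Polynomial.leadingCoeff_prod]
      exact Finset.prod_congr rfl fun j' _ => hDlead j'
    rw [hNdef, Polynomial.finset_sum_coeff, Finset.sum_congr rfl (fun j _ => hco j)]
    have hrow0 := hrow 0
    rw [Finset.sum_congr rfl (fun j _ => by rw [hM0 j])] at hrow0
    have hps : ∀ j : Fin d, c j * ∏ j' ∈ Finset.univ.erase j, L j'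
        = (∏ j' : Fin d, L j') * (1 / L j * c j) := by
      intro j
      rw [← Finset.mul_prod_erase Finset.univ _ (Finset.mem_univ j)]
      field_simp [hLne j]
    rw [Finset.sum_congr rfl (fun j _ => hps j), ← Finset.mul_sum, hrow0, mul_zero]
  -- degree bound
  have hNdegle : N.natDegree ≤ d - 1 := by
    refine Polynomial.natDegree_sum_le_of_forall_le _ _ fun j _ => ?_
    calc (Polynomial.C (c j) * ∏ j' ∈ Finset.univ.erase j, D j').natDegree
        ≤ (∏ j' ∈ Finset.univ.erase j, D j').natDegree := Polynomial.natDegree_C_mul_le _ _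
      _ = d - 1 := hprodDeg j
  -- the root set
  have hN0 : N = 0 := by
    by_cases h : N = 0
    · exact h
    set s : Finset ℂ := (Finset.univ.erase (0 : Fin d)).image b with hsdef
    have hscard : s.card = d - 1 := by
      rw [hsdef, Finset.card_image_of_injOn, hcard_erase]
      intro x hx y hy hxy
      exact hbinj x y (Finset.mem_erase.mp hx).1 (Finset.mem_erase.mp hy).1 hxy
    refine Polynomial.eq_zero_of_natDegree_lt_card_of_eval_eq_zero' N s ?_ ?_
    · intro x hx
      obtain ⟨i, hi, rfl⟩ := Finset.mem_image.mp hx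
      exact hNroot i (Finset.mem_erase.mp hi).1
    · rw [hscard]
      rcases lt_or_eq_of_le hNdegle with h1 | h1
      · exact h1
      · exfalso
        have : N.leadingCoeff = 0 := by rw [Polynomial.leadingCoeff, h1]; exact htop
        exact h (Polynomial.leadingCoeff_eq_zero.mp this)
  -- conclude c = 0
  apply hc
  funext j
  have hev := hNeval (L j)⁻¹
  rw [hN0] at hev
  simp only [Polynomial.eval_zero] at hev
  have hsingle : ∑ j'' : Fin d, c j'' * ∏ j' ∈ Finset.univ.erase j'', (L j' * (L j)⁻¹ - 1)
      = c j * ∏ j' ∈ Finset.univ.erase j, (L j' * (L j)⁻¹ - 1) := by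
    refine Finset.sum_eq_single j (fun j'' _ hne => ?_) (fun h => absurd (Finset.mem_univ j) h)
    have hjmem : j ∈ Finset.univ.erase j'' := Finset.mem_erase.mpr ⟨Ne.symm hne, Finset.mem_univ j⟩
    have hz : (fun j' => L j' * (L j)⁻¹ - 1) j = 0 := by
      simp only [mul_inv_cancel₀ (hLne j), sub_self]
    rw [Finset.prod_eq_zero hjmem hz, mul_zero]
  rw [hsingle] at hev
  have hprodne : ∏ j' ∈ Finset.univ.erase j, (L j' * (L j)⁻¹ - 1) ≠ 0 := by
    apply Finset.prod_ne_zero_iff.mpr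
    intro j' hj' h
    have hj'j : j' ≠ j := (Finset.mem_erase.mp hj').1
    have : L j' = L j := by
      have h1 : L j' * (L j)⁻¹ = 1 := by linear_combination h
      field_simp [hLne j] at h1
      exact h1
    exact hj'j (hLinj this)
  rcases mul_eq_zero.mp hev.symm with h | h
  · simpa using h
  · exact absurd h hprodne

end
end

section
/- Let θ₁,…,θ_n ∈ [−π, π). Then there exists a strictly increasing sequence (n_k) of positive integers such that, for each j = 1,…,n, n_k·θ_j → 0 modulo 2π as k → ∞; equivalently, exp(i·n_k·θ_j) → 1 for every j. -/
open Polynomial Filter Topology MeasureTheory Metric Asymptotics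

noncomputable section

lemma aux_pow_err (z : ℂ) (hz : ‖z‖ = 1) (M : ℕ) : ‖z ^ M - 1‖ ≤ M * ‖z - 1‖ := by
  induction M with
  | zero => simp
  | succ M ih =>
    have h1 : z ^ (M + 1) - 1 = z ^ M * (z - 1) + (z ^ M - 1) := by ring
    calc ‖z ^ (M + 1) - 1‖ ≤ ‖z ^ M * (z - 1)‖ + ‖z ^ M - 1‖ := by
          rw [h1]; exact norm_add_le _ _
      _ = ‖z - 1‖ + ‖z ^ M - 1‖ := by rw [norm_mul, norm_pow, hz, one_pow, one_mul]
      _ ≤ ‖z - 1‖ + M * ‖z - 1‖ := by linarith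
      _ = (M + 1 : ℕ) * ‖z - 1‖ := by push_cast; ring

lemma aux_norm_exp (m : ℕ) (t : ℝ) : ‖Complex.exp (Complex.I * m * t)‖ = 1 := by
  have : Complex.I * (m : ℂ) * (t : ℂ) = ((m * t : ℝ) : ℂ) * Complex.I := by
    push_cast; ring
  rw [this, Complex.norm_exp_ofReal_mul_I]

lemma aux_small (n : ℕ) (θ : Fin n → ℝ) (ε : ℝ) (hε : 0 < ε) :
    ∃ d : ℕ, 0 < d ∧ ∀ j, ‖Complex.exp (Complex.I * d * θ j) - 1‖ < ε := by
  set F : ℕ → (Fin n → ℂ) := fun m j => Complex.exp (Complex.I * m * θ j) with hF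
  have hK : IsCompact (Set.univ.pi fun _ : Fin n => Metric.sphere (0:ℂ) 1) :=
    isCompact_univ_pi fun _ => isCompact_sphere 0 1
  have hmem : ∀ m, F m ∈ Set.univ.pi fun _ : Fin n => Metric.sphere (0:ℂ) 1 := by
    intro m j _
    simp [F, aux_norm_exp m (θ j)]
  obtain ⟨L, hL, φ, hφ, hconv⟩ := hK.tendsto_subseq hmem
  have hLj : ∀ j, ‖L j‖ = 1 := by
    intro j
    have := hL j (Set.mem_univ j)
    simpa [Metric.mem_sphere, dist_eq_norm] using this
  have hconv' : ∀ j, Tendsto (fun k => F (φ (k+1)) j) atTop (𝓝 (L j)) := fun j =>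
    (tendsto_pi_nhds.1 hconv j).comp (tendsto_add_atTop_nat 1)
  have hdiff : ∀ j, Tendsto
      (fun k => Complex.exp (Complex.I * ((φ (k+1) - φ k : ℕ) : ℂ) * θ j)) atTop (𝓝 1) := by
    intro j
    have h1 : Tendsto (fun k => F (φ (k+1)) j * (starRingEnd ℂ) (F (φ k) j)) atTop
        (𝓝 (L j * (starRingEnd ℂ) (L j))) :=
      (hconv' j).mul
        ((Complex.continuous_conj.tendsto _).comp (tendsto_pi_nhds.1 hconv j))
    have h2 : L j * (starRingEnd ℂ) (L j) = 1 := by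
      rw [Complex.mul_conj]
      norm_cast
      rw [← Complex.sq_norm, hLj j]; norm_num
    rw [h2] at h1
    have heq : ∀ k, F (φ (k+1)) j * (starRingEnd ℂ) (F (φ k) j)
        = Complex.exp (Complex.I * ((φ (k+1) - φ k : ℕ) : ℂ) * θ j) := by
      intro k
      have hle : φ k ≤ φ (k+1) := (hφ (Nat.lt_succ_self k)).le
      have hc : (starRingEnd ℂ) (F (φ k) j) = Complex.exp (-(Complex.I * (φ k : ℂ) * θ j)) := by
        simp only [F]
        rw [← Complex.exp_conj]
        congr 1
        simp [map_mul, Complex.conj_I, Complex.conj_ofReal]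
      simp only [F]
      rw [hc, ← Complex.exp_add]
      congr 1
      rw [Nat.cast_sub hle]
      ring
    exact h1.congr (fun k => heq k)
  have hall : ∀ᶠ k in atTop, ∀ j,
      ‖Complex.exp (Complex.I * ((φ (k+1) - φ k : ℕ) : ℂ) * θ j) - 1‖ < ε := by
    rw [eventually_all]
    intro j
    have := (hdiff j).eventually (Metric.ball_mem_nhds (1:ℂ) hε)
    filter_upwards [this] with k hk
    simpa [dist_eq_norm] using hk
  obtain ⟨k, hk⟩ := hall.exists
  exact ⟨φ (k+1) - φ k, Nat.sub_pos_of_lt (hφ (Nat.lt_succ_self k)), hk⟩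

lemma aux_key (n : ℕ) (θ : Fin n → ℝ) (ε : ℝ) (hε : 0 < ε) (N : ℕ) :
    ∃ d : ℕ, N < d ∧ ∀ j, ‖Complex.exp (Complex.I * d * θ j) - 1‖ < ε := by
  obtain ⟨d₀, hd₀, hsm⟩ := aux_small n θ (ε / (N + 1)) (by positivity)
  refine ⟨(N + 1) * d₀, ?_, ?_⟩
  · calc N < N + 1 := Nat.lt_succ_self N
      _ ≤ (N + 1) * d₀ := Nat.le_mul_of_pos_right _ hd₀
  · intro j
    have hz : ‖Complex.exp (Complex.I * d₀ * θ j)‖ = 1 := aux_norm_exp d₀ (θ j)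
    have hpow : Complex.exp (Complex.I * ((N + 1) * d₀ : ℕ) * θ j)
        = Complex.exp (Complex.I * d₀ * θ j) ^ (N + 1) := by
      rw [← Complex.exp_nat_mul]
      congr 1
      push_cast
      ring
    rw [hpow]
    calc ‖Complex.exp (Complex.I * d₀ * θ j) ^ (N + 1) - 1‖
        ≤ (N + 1) * ‖Complex.exp (Complex.I * d₀ * θ j) - 1‖ := by
          have := aux_pow_err _ hz (N + 1)
          push_cast at this ⊢
          exact this
      _ < (N + 1) * (ε / (N + 1)) := by
          apply mul_lt_mul_of_pos_left (hsm j) (by positivity)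
      _ = ε := by field_simp


/-- Simultaneous approximation of multiples of angles to `0` modulo `2π`. -/
theorem simultaneous_angles (n : ℕ) (θ : Fin n → ℝ)
    (hθ : ∀ j, θ j ∈ Set.Ico (-Real.pi) Real.pi) :
    ∃ nk : ℕ → ℕ, StrictMono nk ∧ (∀ k, 0 < nk k) ∧
      ∀ j : Fin n,
        Filter.Tendsto (fun k => Complex.exp (Complex.I * (nk k : ℂ) * (θ j : ℂ)))
          Filter.atTop (nhds 1) := by
  have key : ∀ k N : ℕ, ∃ d : ℕ, N < d ∧
      ∀ j, ‖Complex.exp (Complex.I * d * θ j) - 1‖ < 1 / (k + 1) :=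
    fun k N => aux_key n θ (1 / (k + 1)) (by positivity) N
  set nk : ℕ → ℕ := fun k =>
    Nat.rec (Classical.choose (key 0 0))
      (fun k ih => Classical.choose (key (k + 1) ih)) k with hnk
  have hspec : ∀ k, (∀ j, ‖Complex.exp (Complex.I * (nk k : ℂ) * θ j) - 1‖ < 1 / (k + 1)) := by
    intro k
    cases k with
    | zero => exact (Classical.choose_spec (key 0 0)).2
    | succ k => exact (Classical.choose_spec (key (k + 1) (nk k))).2
  have hmono : ∀ k, nk k < nk (k + 1) := fun k =>
    (Classical.choose_spec (key (k + 1) (nk k))).1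
  have hsm : StrictMono nk := strictMono_nat_of_lt_succ hmono
  refine ⟨nk, hsm, ?_, ?_⟩
  · intro k
    cases k with
    | zero => exact lt_of_le_of_lt (Nat.zero_le 0) (Classical.choose_spec (key 0 0)).1
    | succ k => exact lt_of_le_of_lt (Nat.zero_le _) (Classical.choose_spec (key (k+1) (nk k))).1
  · intro j
    rw [Metric.tendsto_atTop]
    intro ε hε
    obtain ⟨K, hK⟩ := exists_nat_one_div_lt hε
    refine ⟨K, fun k hk => ?_⟩
    rw [dist_eq_norm]
    calc ‖Complex.exp (Complex.I * (nk k : ℂ) * θ j) - 1‖ < 1 / (k + 1) := hspec k j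
      _ ≤ 1 / (K + 1) := by
          apply div_le_div_of_nonneg_left one_pos.le (by positivity)
          have : (K:ℝ) ≤ k := Nat.cast_le.2 hk
          linarith
      _ < ε := hK

end
end

section
/- Let ω : ℕ → (0,∞) be a monotone (nondecreasing or nonincreasing) sequence satisfying ω_n / ω_{n−⌊√n⌋} → 1 as n → ∞. Then ω_k / ω_{k+1} → 1 as k → ∞. -/
open Polynomial Filter Topology MeasureTheory Metric Asymptotics

noncomputable section

/-- The ratio condition implies `ω_k/ω_{k+1} → 1`. -/
theorem ratio_to_one (ω : ℕ → ℝ) (hpos : ∀ k, 0 < ω k)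
    (hmono : Monotone ω ∨ Antitone ω)
    (hratio : Filter.Tendsto (fun n => ω n / ω (n - Nat.sqrt n)) Filter.atTop (nhds 1)) :
    Filter.Tendsto (fun k => ω k / ω (k + 1)) Filter.atTop (nhds 1) := by
  have hshift : Filter.Tendsto (fun k => ω (k + 1) / ω (k + 1 - Nat.sqrt (k + 1)))
      Filter.atTop (nhds 1) := hratio.comp (Filter.tendsto_add_atTop_nat 1)
  have hinv : Filter.Tendsto (fun k => (ω (k + 1) / ω (k + 1 - Nat.sqrt (k + 1)))⁻¹)
      Filter.atTop (nhds 1) := by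
    have := hshift.inv₀ one_ne_zero
    simpa using this
  have hle : ∀ k, k + 1 - Nat.sqrt (k + 1) ≤ k := by
    intro k
    have h1 : 1 ≤ Nat.sqrt (k + 1) := Nat.sqrt_pos.mpr (Nat.succ_pos k)
    omega
  rcases hmono with hm | hm
  · refine tendsto_of_tendsto_of_tendsto_of_le_of_le' hinv tendsto_const_nhds ?_ ?_
    · filter_upwards with k
      rw [inv_div]
      exact div_le_div_of_nonneg_right (hm (hle k)) (hpos (k + 1)).le
    · filter_upwards with k
      exact div_le_one_of_le₀ (hm (Nat.le_succ k)) (hpos (k + 1)).le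
  · refine tendsto_of_tendsto_of_tendsto_of_le_of_le' tendsto_const_nhds hinv ?_ ?_
    · filter_upwards with k
      exact (one_le_div (hpos (k + 1))).mpr (hm (Nat.le_succ k))
    · filter_upwards with k
      rw [inv_div]
      exact div_le_div_of_nonneg_right (hm (hle k)) (hpos (k + 1)).le

end
end

section
/- Let ω be a weight, let f be a nonzero polynomial, and let p_n be the n-th optimal polynomial approximant to 1/f in H²_ω. Then the constant coefficient of 1 − p_n f equals the squared H²_ω norm of 1 − p_n f: coeff₀(1 − p_n f) = ∑_k ω_k |coeff_k(1 − p_n f)|². In particular this constant coefficient is a nonnegative real number. -/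
open Polynomial Filter Topology MeasureTheory Metric Asymptotics

noncomputable section

/-- The constant coefficient of `1 - p_n f` equals its squared `H²_ω` norm. -/
theorem constant_coefficient_eq_normSq
    (ω : ℕ → ℝ) (hω : IsWeight ω) (f : Polynomial ℂ) (hf : f ≠ 0)
    (p : ℕ → Polynomial ℂ) (hp : ∀ n, IsOPA ω f n (p n)) (n : ℕ) :
    ((1 : Polynomial ℂ) - p n * f).coeff 0 = (wNormSq ω (1 - p n * f) : ℂ) := by
  obtain ⟨hpos, -, hω0, -, -⟩ := hω
  set g : Polynomial ℂ := 1 - p n * f with hg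
  set h : Polynomial ℂ := p n * f with hh
  have hgh : g + h = 1 := by rw [hg, hh]; ring
  set M : ℕ := max g.natDegree h.natDegree + 1 with hM
  have hgM : g.natDegree < M := Nat.lt_succ_of_le (le_max_left _ _)
  have hhM : h.natDegree < M := Nat.lt_succ_of_le (le_max_right _ _)
  have wEq : ∀ u : Polynomial ℂ, u.natDegree < M →
      wNormSq ω u = ∑ k ∈ Finset.range M, ω k * ‖u.coeff k‖ ^ 2 := by
    intro u hu
    rw [wNormSq]
    apply Finset.sum_subset
    · intro k hk
      simp only [Finset.mem_range] at *
      omega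
    · intro k _ hk'
      simp only [Finset.mem_range, not_lt] at hk'
      rw [Polynomial.coeff_eq_zero_of_natDegree_lt (by omega)]
      simp
  set A : ℂ := ∑ k ∈ Finset.range M, (ω k : ℂ) * g.coeff k * (starRingEnd ℂ) (h.coeff k)
    with hA
  set Sg : ℝ := ∑ k ∈ Finset.range M, ω k * ‖g.coeff k‖ ^ 2 with hSg
  set Sh : ℝ := ∑ k ∈ Finset.range M, ω k * ‖h.coeff k‖ ^ 2 with hSh
  -- variational inequality
  have key : ∀ c : ℂ,
      Sg ≤ ∑ k ∈ Finset.range M, ω k * ‖g.coeff k - c * h.coeff k‖ ^ 2 := by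
    intro c
    have hq : ((1 + c) • p n).degree ≤ (n : ℕ) :=
      le_trans (Polynomial.degree_smul_le _ _) (hp n).1
    have hmin := (hp n).2 _ hq
    have heq : (1 : Polynomial ℂ) - ((1 + c) • p n) * f = g - c • h := by
      rw [hg, hh]
      simp only [smul_mul_assoc]
      rw [add_smul, one_smul]
      ring
    rw [heq] at hmin
    have hdeg : (g - c • h).natDegree < M := by
      refine lt_of_le_of_lt (Polynomial.natDegree_sub_le _ _) ?_
      have := Polynomial.natDegree_smul_le c h
      omega
    have hmin' : Sg ≤ ∑ k ∈ Finset.range M, ω k * ‖(g - c • h).coeff k‖ ^ 2 := by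
      rw [hSg, ← wEq g hgM, ← wEq (g - c • h) hdeg]; exact hmin
    calc Sg ≤ ∑ k ∈ Finset.range M, ω k * ‖(g - c • h).coeff k‖ ^ 2 := hmin'
      _ = _ := by
        refine Finset.sum_congr rfl fun k _ => ?_
        simp [Polynomial.coeff_sub, Polynomial.coeff_smul, smul_eq_mul]
  -- expansion
  have expand : ∀ c : ℂ,
      ∑ k ∈ Finset.range M, ω k * ‖g.coeff k - c * h.coeff k‖ ^ 2
        = Sg - 2 * ((starRingEnd ℂ) c * A).re + Complex.normSq c * Sh := by
    intro c
    have hterm : ∀ k, ω k * ‖g.coeff k - c * h.coeff k‖ ^ 2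
        = ω k * ‖g.coeff k‖ ^ 2
          - 2 * ((starRingEnd ℂ) c *
              ((ω k : ℂ) * g.coeff k * (starRingEnd ℂ) (h.coeff k))).re
          + Complex.normSq c * (ω k * ‖h.coeff k‖ ^ 2) := by
      intro k
      simp only [Complex.sq_norm, Complex.normSq_apply, Complex.mul_re, Complex.mul_im,
        Complex.sub_re, Complex.sub_im, Complex.conj_re, Complex.conj_im,
        Complex.ofReal_re, Complex.ofReal_im]
      ring
    rw [Finset.sum_congr rfl fun k _ => hterm k]
    rw [Finset.sum_add_distrib, Finset.sum_sub_distrib, ← Finset.mul_sum,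
      ← Complex.re_sum, ← Finset.mul_sum, ← Finset.mul_sum, hA, hSg, hSh]
  -- orthogonality
  have A0 : A = 0 := by
    by_contra hA0
    have hnA : 0 < Complex.normSq A := Complex.normSq_pos.mpr hA0
    have hSh0 : 0 ≤ Sh := Finset.sum_nonneg fun k _ => by
      have := (hpos k).le; positivity
    set t : ℝ := 1 / (Sh + 1) with ht
    have ht0 : 0 < t := by positivity
    have ht' : t * (Sh + 1) = 1 := by rw [ht]; field_simp
    have hineq := key ((t : ℂ) * A)
    rw [expand] at hineq
    have h1 : ((starRingEnd ℂ) ((t : ℂ) * A) * A).re = t * Complex.normSq A := by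
      simp [Complex.normSq_apply, Complex.mul_re, Complex.mul_im, Complex.conj_re,
        Complex.conj_im]
      ring
    have h2 : Complex.normSq ((t : ℂ) * A) = t ^ 2 * Complex.normSq A := by
      rw [Complex.normSq_mul, Complex.normSq_ofReal]; ring
    rw [h1, h2] at hineq
    nlinarith [mul_pos ht0 hnA, mul_pos (mul_pos ht0 ht0) hnA]
  -- conclusion
  have hsum1 : ∑ k ∈ Finset.range M, (ω k : ℂ) * g.coeff k *
      (starRingEnd ℂ) ((1 : Polynomial ℂ).coeff k) = g.coeff 0 := by
    rw [Finset.sum_eq_single 0]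
    · simp [hω0]
    · intro k _ hk
      rw [Polynomial.coeff_one]
      simp [hk]
    · intro habs
      exact absurd (Finset.mem_range.mpr (by omega)) habs
  have hsplit : (g.coeff 0 : ℂ)
      = ∑ k ∈ Finset.range M, (ω k : ℂ) * g.coeff k * (starRingEnd ℂ) (g.coeff k) + A := by
    rw [hA, ← Finset.sum_add_distrib, ← hsum1]
    refine Finset.sum_congr rfl fun k _ => ?_
    rw [← hgh]
    simp only [Polynomial.coeff_add, map_add]
    ring
  rw [hsplit, A0, add_zero, wEq _ hgM, ← hSg, hSg]
  push_cast
  refine Finset.sum_congr rfl fun k _ => ?_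
  rw [mul_assoc, Complex.mul_conj]
  norm_cast
  rw [Complex.sq_norm]

end
end

section
/- Let ω be a weight, let 1 ≤ d₁ ≤ d be integers with d₁ ≤ d, and let z₁,…,z_d ∈ ℂ be distinct points with |z_i| = 1 for 1 ≤ i ≤ d₁ and |z_i| > 1 for d₁ < i ≤ d. Let E be the d×d matrix with entries e_{l,m} = k_{n+d}(z_l, z_m), and for 1 ≤ i ≤ d₁ let E_{i,i} denote the (i,i) cofactor of E, i.e. the determinant of E with its i-th row and i-th column removed. Then E_{i,i} · ω_{n+d}^{d−d₁} / (S_{n+d}^{d₁−1} · ∏_{l=d₁+1}^d |z_l|^{2(n+d+1)}) → det(B) as n → ∞, where B is the (d−d₁)×(d−d₁) matrix with entries b_{l,m} = 1/(z̄_m z_l − 1) for d₁+1 ≤ l, m ≤ d. -/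
open Polynomial Filter Topology MeasureTheory Metric Asymptotics

noncomputable section

section WgtAux
variable {ω : ℕ → ℝ}

lemma wgt_S_pos (hω : IsWeight ω) (N : ℕ) : 1 ≤ S ω N := by
  obtain ⟨hpos, _, h0, _, _⟩ := hω
  have h1 : (1:ℝ) = 1 / ω 0 := by rw [h0]; norm_num
  rw [h1, S]
  refine Finset.single_le_sum (f := fun k => 1 / ω k) (fun k _ => by
    have := hpos k; positivity) ?_
  simp

lemma wgt_S_tendsto (hω : IsWeight ω) : Tendsto (S ω) atTop atTop := by
  obtain ⟨hpos, _, _, _, hns⟩ := hω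
  have h := (not_summable_iff_tendsto_nat_atTop_of_nonneg
    (f := fun k => 1 / ω k) (fun k => by have := hpos k; positivity)).mp hns
  exact h.comp (tendsto_add_atTop_nat 1)

lemma wgt_step (hω : IsWeight ω) {ε : ℝ} (hε : 0 < ε) :
    ∃ K : ℕ, ∀ n, K ≤ n → ω n ≤ (1 + ε) * ω (n - 1) ∧ ω (n - 1) ≤ (1 + ε) * ω n := by
  obtain ⟨hpos, hmono, h0, hrat, _⟩ := hω
  have h1 : ∀ᶠ n in atTop, ω n / ω (n - Nat.sqrt n) < 1 + ε :=
    (tendsto_order.mp hrat).2 _ (by linarith)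
  have h2 : ∀ᶠ n in atTop, 1 / (1 + ε) < ω n / ω (n - Nat.sqrt n) :=
    (tendsto_order.mp hrat).1 _ (by
      rw [div_lt_one (by linarith)]; linarith)
  have h3 : ∀ᶠ n : ℕ in atTop, 1 ≤ n := eventually_ge_atTop 1
  obtain ⟨K, hK⟩ := eventually_atTop.mp (h1.and (h2.and h3))
  refine ⟨K, fun n hn => ?_⟩
  obtain ⟨ha, hb, hn1⟩ := hK n hn
  have hsq : 1 ≤ Nat.sqrt n := Nat.one_le_iff_ne_zero.mpr (by
    intro h; exact absurd (Nat.sqrt_eq_zero.mp h) (by omega))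
  have hpos1 := hpos n
  have hpos2 := hpos (n - 1)
  have hpos3 := hpos (n - Nat.sqrt n)
  have hle : n - Nat.sqrt n ≤ n - 1 := by omega
  rcases hmono with hm | hm
  · have k1 : ω (n - Nat.sqrt n) ≤ ω (n - 1) := hm hle
    have k2 : ω n < (1 + ε) * ω (n - Nat.sqrt n) := by
      rw [div_lt_iff₀ hpos3] at ha; linarith
    have k3 : ω (n - 1) ≤ ω n := hm (by omega)
    constructor
    · nlinarith
    · nlinarith
  · have k1 : ω (n - 1) ≤ ω (n - Nat.sqrt n) := hm hle
    have k2 : ω (n - Nat.sqrt n) < (1 + ε) * ω n := by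
      rw [div_lt_div_iff₀ (by linarith) hpos3] at hb
      nlinarith
    have k3 : ω n ≤ ω (n - 1) := hm (by omega)
    constructor
    · nlinarith
    · nlinarith

lemma wgt_ratio_tendsto (hω : IsWeight ω) (j : ℕ) :
    Tendsto (fun N => ω N / ω (N - j)) atTop (nhds 1) := by
  obtain ⟨hpos, hmono, h0, hrat, _⟩ := hω
  have hev : ∀ᶠ N : ℕ in atTop, j ≤ Nat.sqrt N := by
    refine eventually_atTop.mpr ⟨j * j, fun N hN => ?_⟩
    calc j = Nat.sqrt (j * j) := by rw [Nat.sqrt_eq]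
    _ ≤ Nat.sqrt N := Nat.sqrt_le_sqrt hN
  rcases hmono with hm | hm
  · refine tendsto_of_tendsto_of_tendsto_of_le_of_le' tendsto_const_nhds hrat ?_ ?_
    · filter_upwards [hev] with N h
      have := hpos (N - j)
      rw [le_div_iff₀ this]
      have : ω (N - j) ≤ ω N := hm (by omega)
      linarith
    · filter_upwards [hev] with N h
      have h1 : ω (N - Nat.sqrt N) ≤ ω (N - j) := hm (by omega)
      have := hpos (N - Nat.sqrt N)
      gcongr
      exact (hpos N).le
  · refine tendsto_of_tendsto_of_tendsto_of_le_of_le' hrat tendsto_const_nhds ?_ ?_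
    · filter_upwards [hev] with N h
      have h1 : ω (N - j) ≤ ω (N - Nat.sqrt N) := hm (by omega)
      have := hpos (N - j)
      gcongr
      exact (hpos N).le
    · filter_upwards [hev] with N h
      have := hpos (N - j)
      rw [div_le_one this]
      exact hm (by omega)

lemma wgt_ratio_bound (hω : IsWeight ω) {ε : ℝ} (hε : 0 < ε) :
    ∃ C : ℝ, 1 ≤ C ∧ ∀ N j, j ≤ N → ω N / ω (N - j) ≤ C * (1 + ε) ^ j := by
  have hpos := hω.1
  have h0 := hω.2.2.1
  obtain ⟨K, hK⟩ := wgt_step hω hε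
  have hε1 : (1:ℝ) ≤ 1 + ε := by linarith
  rcases hω.2.1 with hm | hm
  · -- monotone
    -- Claim A : for K ≤ m ≤ n, ω n ≤ (1+ε)^(n-m) * ω m
    have claimA : ∀ m n, K ≤ m → m ≤ n → ω n ≤ (1 + ε) ^ (n - m) * ω m := by
      intro m n hKm hmn
      induction n with
      | zero =>
        have : m = 0 := by omega
        subst this; simp
      | succ n ih =>
        rcases Nat.lt_or_ge m (n+1) with h | h
        · have hmn' : m ≤ n := by omega
          have h1 : ω (n+1) ≤ (1 + ε) * ω n := by
            have := (hK (n+1) (by omega)).1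
            simpa using this
          have h2 := ih hmn'
          have : n + 1 - m = (n - m) + 1 := by omega
          rw [this, pow_succ]
          have hp : (0:ℝ) < (1+ε)^(n-m) := by positivity
          nlinarith [hpos n, hpos m]
        · have : m = n + 1 := by omega
          subst this
          simp
    have hC1 : (1:ℝ) ≤ max 1 (ω K) := le_max_left _ _
    refine ⟨max 1 (ω K), hC1, fun N j hj => ?_⟩
    have hω1 : ∀ k, 1 ≤ ω k := fun k => by
      have := hm (Nat.zero_le k); rw [h0] at this; exact this
    have hNj := hpos (N - j)
    have hpow : (0:ℝ) < (1+ε)^j := by positivity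
    rcases Nat.lt_or_ge (N - j) K with h | h
    · rcases Nat.lt_or_ge N K with h2 | h2
      · -- N < K : ω N ≤ ω K
        have : ω N ≤ ω K := hm (by omega)
        rw [div_le_iff₀ hNj]
        calc ω N ≤ ω K := this
        _ ≤ max 1 (ω K) := le_max_right _ _
        _ ≤ max 1 (ω K) * (1+ε)^j :=
            le_mul_of_one_le_right (by positivity) (one_le_pow₀ hε1)
        _ ≤ max 1 (ω K) * (1+ε)^j * ω (N - j) :=
            le_mul_of_one_le_right (by positivity) (hω1 _)
      · -- N - j < K ≤ N
        have hA := claimA K N (le_refl K) h2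
        have hle : (1+ε)^(N-K) ≤ (1+ε)^j := pow_le_pow_right₀ hε1 (by omega)
        rw [div_le_iff₀ hNj]
        calc ω N ≤ (1+ε)^(N-K) * ω K := hA
        _ ≤ (1+ε)^j * ω K := mul_le_mul_of_nonneg_right hle (hpos K).le
        _ ≤ max 1 (ω K) * (1+ε)^j := by
            rw [mul_comm]
            exact mul_le_mul_of_nonneg_right (le_max_right _ _) hpow.le
        _ ≤ max 1 (ω K) * (1+ε)^j * ω (N - j) :=
            le_mul_of_one_le_right (by positivity) (hω1 _)
    · have hA := claimA (N - j) N h (by omega)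
      have : N - (N - j) = j := by omega
      rw [this] at hA
      rw [div_le_iff₀ hNj]
      calc ω N ≤ (1+ε)^j * ω (N-j) := hA
      _ ≤ max 1 (ω K) * (1+ε)^j * ω (N-j) := by
          rw [mul_assoc]
          exact le_mul_of_one_le_left (mul_nonneg hpow.le hNj.le) hC1
  · -- antitone : ratio ≤ 1
    refine ⟨1, le_refl _, fun N j hj => ?_⟩
    have hNj := hpos (N - j)
    rw [div_le_iff₀ hNj, one_mul]
    have h1 : ω N ≤ ω (N - j) := hm (by omega)
    have hpow : (1:ℝ) ≤ (1+ε)^j := one_le_pow₀ (by linarith)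
    nlinarith

lemma wgt_wS_tendsto (hω : IsWeight ω) :
    Tendsto (fun N => ω N * S ω N) atTop atTop := by
  obtain ⟨hpos, hmono, h0, hrat, _⟩ := hω
  -- eventually ω (N - sqrt N) ≤ 2 * ω N  and ω k ≤ 2 ω N on the window
  have h2 : ∀ᶠ N in atTop, (1:ℝ)/2 < ω N / ω (N - Nat.sqrt N) :=
    (tendsto_order.mp hrat).1 _ (by norm_num)
  have key : ∀ᶠ N in atTop, (Nat.sqrt N : ℝ) / 2 ≤ ω N * S ω N := by
    filter_upwards [h2] with N hN
    have hb : ω (N - Nat.sqrt N) < 2 * ω N := by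
      have hp := hpos (N - Nat.sqrt N)
      rw [div_lt_div_iff₀ (by norm_num) hp] at hN
      linarith
    have hwin : ∀ k ∈ Finset.Icc (N - Nat.sqrt N) N, (1:ℝ) / (2 * ω N) ≤ 1 / ω k := by
      intro k hk
      simp only [Finset.mem_Icc] at hk
      have hωk : ω k ≤ 2 * ω N := by
        rcases hmono with hm | hm
        · have : ω k ≤ ω N := hm hk.2
          nlinarith [hpos N]
        · have : ω k ≤ ω (N - Nat.sqrt N) := hm hk.1
          linarith
      exact one_div_le_one_div_of_le (hpos k) hωk
    have hsub : Finset.Icc (N - Nat.sqrt N) N ⊆ Finset.range (N + 1) := by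
      intro k hk
      simp only [Finset.mem_Icc] at hk
      simp only [Finset.mem_range]; omega
    have hS1 : ∑ k ∈ Finset.Icc (N - Nat.sqrt N) N, (1:ℝ) / (2 * ω N) ≤ S ω N := by
      refine le_trans (Finset.sum_le_sum hwin) ?_
      refine Finset.sum_le_sum_of_subset_of_nonneg hsub ?_
      intro k _ _
      have := hpos k
      positivity
    have hcard : (Finset.Icc (N - Nat.sqrt N) N).card = Nat.sqrt N + 1 := by
      rw [Nat.card_Icc]
      have := Nat.sqrt_le_self N
      omega
    rw [Finset.sum_const, hcard] at hS1
    have hpN := hpos N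
    have h3 : (Nat.sqrt N : ℝ) / (2 * ω N) ≤ S ω N := by
      refine le_trans ?_ hS1
      rw [nsmul_eq_mul]
      rw [div_le_iff₀ (by linarith)]
      push_cast
      have h4 : (0:ℝ) ≤ (Nat.sqrt N : ℝ) := Nat.cast_nonneg _
      have h5 : 2 * ω N * (((Nat.sqrt N : ℝ) + 1) * (1 / (2 * ω N)))
          = (Nat.sqrt N : ℝ) + 1 := by field_simp
      linarith
    calc (Nat.sqrt N : ℝ) / 2 = ω N * ((Nat.sqrt N : ℝ) / (2 * ω N)) := by
          field_simp
    _ ≤ ω N * S ω N := by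
          exact mul_le_mul_of_nonneg_left h3 hpN.le
  refine tendsto_atTop_mono' atTop key ?_
  have hsqrt : Tendsto (fun N : ℕ => Nat.sqrt N) atTop atTop := by
    refine tendsto_atTop_atTop.mpr (fun b => ⟨b * b, fun a ha => ?_⟩)
    calc b = Nat.sqrt (b * b) := by rw [Nat.sqrt_eq]
    _ ≤ Nat.sqrt a := Nat.sqrt_le_sqrt ha
  have : Tendsto (fun N : ℕ => (Nat.sqrt N : ℝ)) atTop atTop :=
    tendsto_natCast_atTop_atTop.comp hsqrt
  exact this.atTop_div_const (by norm_num)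

/-- Abel-summation bound: for |a| = 1, a ≠ 1,
  |∑_{k ≤ N} a^k/ω_k| ≤ C₀ (2/ω_N + 1). -/
lemma wgt_circle_bound (hω : IsWeight ω) {a : ℂ} (ha : ‖a‖ = 1) (ha1 : a ≠ 1)
    (N : ℕ) :
    ‖∑ k ∈ Finset.range (N + 1), a ^ k / (ω k : ℂ)‖
      ≤ (2 / ‖a - 1‖) * (2 / ω N + 1) := by
  have hpos := hω.1
  have h0 := hω.2.2.1
  set C₀ : ℝ := 2 / ‖a - 1‖ with hC₀
  have hane : a - 1 ≠ 0 := sub_ne_zero.mpr ha1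
  have habs : 0 < ‖a - 1‖ := by
    simpa [norm_pos_iff] using hane
  -- partial sums of geometric series are bounded by C₀
  have hG : ∀ n : ℕ, ‖∑ i ∈ Finset.range n, a ^ i‖ ≤ C₀ := by
    intro n
    rw [geom_sum_eq ha1]
    rw [norm_div]
    rw [hC₀, div_le_div_iff₀ (by simpa [norm_pos_iff] using hane) habs]
    have h1 : ‖a ^ n - 1‖ ≤ 2 := by
      calc ‖a ^ n - 1‖ ≤ ‖a ^ n‖ + 1 := by
            simpa using norm_sub_le (a ^ n) 1
      _ ≤ 2 := by rw [norm_pow, ha]; norm_num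
    nlinarith [norm_nonneg (a ^ n - 1)]
  have hby := Finset.sum_range_by_parts (fun k => ((ω k : ℝ) : ℂ)⁻¹) (fun k => a ^ k) (N + 1)
  simp only [smul_eq_mul] at hby
  have heq : ∑ k ∈ Finset.range (N + 1), a ^ k / (ω k : ℂ)
      = ∑ i ∈ Finset.range (N + 1), ((ω i : ℝ) : ℂ)⁻¹ * a ^ i := by
    refine Finset.sum_congr rfl (fun k _ => ?_)
    rw [div_eq_inv_mul]
  rw [heq, hby]
  simp only [Nat.add_sub_cancel]
  have hterm : ∀ i : ℕ, ‖(((ω (i+1) : ℝ) : ℂ)⁻¹ - ((ω i : ℝ) : ℂ)⁻¹)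
      * ∑ j ∈ Finset.range (i + 1), a ^ j‖
      ≤ |(ω (i+1))⁻¹ - (ω i)⁻¹| * C₀ := by
    intro i
    rw [norm_mul]
    have : ‖((ω (i+1) : ℝ) : ℂ)⁻¹ - ((ω i : ℝ) : ℂ)⁻¹‖
        = |(ω (i+1))⁻¹ - (ω i)⁻¹| := by
      rw [← Complex.ofReal_inv, ← Complex.ofReal_inv, ← Complex.ofReal_sub,
        Complex.norm_real, Real.norm_eq_abs]
    rw [this]
    exact mul_le_mul_of_nonneg_left (hG _) (abs_nonneg _)
  -- total variation of 1/ω is at most 1/ω_N + 1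
  have htv : ∑ i ∈ Finset.range N, |(ω (i+1))⁻¹ - (ω i)⁻¹| ≤ (ω N)⁻¹ + 1 := by
    have htel : ∑ i ∈ Finset.range N, ((ω (i+1))⁻¹ - (ω i)⁻¹) = (ω N)⁻¹ - (ω 0)⁻¹ :=
      Finset.sum_range_sub (fun i => (ω i)⁻¹) N
    rcases hω.2.1 with hm | hm
    · have : ∀ i ∈ Finset.range N, |(ω (i+1))⁻¹ - (ω i)⁻¹| = -((ω (i+1))⁻¹ - (ω i)⁻¹) := by
        intro i _
        rw [abs_of_nonpos]
        have h1 := hpos i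
        have h2 := hpos (i+1)
        have := hm (Nat.le_succ i)
        simp only [sub_nonpos]
        exact inv_anti₀ h1 this
      rw [Finset.sum_congr rfl this, Finset.sum_neg_distrib, htel, h0]
      have := hpos N
      have : 0 < (ω N)⁻¹ := by positivity
      simp; linarith
    · have : ∀ i ∈ Finset.range N, |(ω (i+1))⁻¹ - (ω i)⁻¹| = ((ω (i+1))⁻¹ - (ω i)⁻¹) := by
        intro i _
        rw [abs_of_nonneg]
        have h1 := hpos (i+1)
        have := hm (Nat.le_succ i)
        simp only [sub_nonneg]
        exact inv_anti₀ h1 this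
      rw [Finset.sum_congr rfl this, htel, h0]
      have := hpos N
      have : 0 < (ω N)⁻¹ := by positivity
      simp; linarith
  calc ‖((ω N : ℝ) : ℂ)⁻¹ * ∑ i ∈ Finset.range (N+1), a ^ i
        - ∑ i ∈ Finset.range N, (((ω (i+1) : ℝ) : ℂ)⁻¹ - ((ω i : ℝ) : ℂ)⁻¹)
            * ∑ j ∈ Finset.range (i+1), a ^ j‖
      ≤ ‖((ω N : ℝ) : ℂ)⁻¹ * ∑ i ∈ Finset.range (N+1), a ^ i‖
        + ‖∑ i ∈ Finset.range N, (((ω (i+1) : ℝ) : ℂ)⁻¹ - ((ω i : ℝ) : ℂ)⁻¹)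
            * ∑ j ∈ Finset.range (i+1), a ^ j‖ := by
        exact norm_sub_le _ _
  _ ≤ (ω N)⁻¹ * C₀ + ((ω N)⁻¹ + 1) * C₀ := by
      have hb1 : ‖((ω N : ℝ) : ℂ)⁻¹ * ∑ i ∈ Finset.range (N+1), a ^ i‖
          ≤ (ω N)⁻¹ * C₀ := by
        rw [norm_mul]
        have hωN := hpos N
        have habsw : ‖((ω N : ℝ) : ℂ)⁻¹‖ = (ω N)⁻¹ := by
          rw [← Complex.ofReal_inv, Complex.norm_real, Real.norm_eq_abs, abs_of_pos (by positivity)]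
        rw [habsw]
        exact mul_le_mul_of_nonneg_left (hG _) (by positivity)
      have hb2 : ‖∑ i ∈ Finset.range N, (((ω (i+1) : ℝ) : ℂ)⁻¹ - ((ω i : ℝ) : ℂ)⁻¹)
            * ∑ j ∈ Finset.range (i+1), a ^ j‖ ≤ ((ω N)⁻¹ + 1) * C₀ := by
        calc ‖∑ i ∈ Finset.range N, _‖ ≤ ∑ i ∈ Finset.range N,
              ‖(((ω (i+1) : ℝ) : ℂ)⁻¹ - ((ω i : ℝ) : ℂ)⁻¹)
                * ∑ j ∈ Finset.range (i+1), a ^ j‖ := norm_sum_le _ _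
        _ ≤ ∑ i ∈ Finset.range N, |(ω (i+1))⁻¹ - (ω i)⁻¹| * C₀ :=
              Finset.sum_le_sum (fun i _ => hterm i)
        _ = (∑ i ∈ Finset.range N, |(ω (i+1))⁻¹ - (ω i)⁻¹|) * C₀ := by
              rw [Finset.sum_mul]
        _ ≤ ((ω N)⁻¹ + 1) * C₀ := by
              have : 0 ≤ C₀ := by positivity
              exact mul_le_mul_of_nonneg_right htv this
      linarith
  _ ≤ C₀ * (2 / ω N + 1) := by
      have hN := hpos N
      have h1 : (0:ℝ) < (ω N)⁻¹ := by positivity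
      have : (ω N)⁻¹ * C₀ + ((ω N)⁻¹ + 1) * C₀ = C₀ * (2 * (ω N)⁻¹ + 1) := by ring
      rw [this, div_eq_mul_inv]

lemma wgt_circle_tendsto (hω : IsWeight ω) {a : ℂ} (ha : ‖a‖ = 1) (ha1 : a ≠ 1) :
    Tendsto (fun N => (∑ k ∈ Finset.range (N + 1), a ^ k / (ω k : ℂ)) / ((S ω N : ℝ) : ℂ))
      atTop (nhds 0) := by
  have hpos := hω.1
  set C₀ : ℝ := 2 / ‖a - 1‖ with hC₀
  have hC₀nn : 0 ≤ C₀ := by positivity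
  have hlim : Tendsto (fun N => C₀ * (2 / (ω N * S ω N) + 1 / S ω N)) atTop (nhds 0) := by
    have h1 : Tendsto (fun N => 2 / (ω N * S ω N)) atTop (nhds 0) := by
      have h := (wgt_wS_tendsto hω).inv_tendsto_atTop.const_mul (2:ℝ)
      rw [mul_zero] at h
      exact h.congr (fun N => (div_eq_mul_inv 2 _).symm)
    have h2 : Tendsto (fun N => 1 / S ω N) atTop (nhds 0) := by
      have h := (wgt_S_tendsto hω).inv_tendsto_atTop
      exact h.congr (fun N => (one_div _).symm)
    simpa using (h1.add h2).const_mul C₀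
  refine squeeze_zero_norm (fun N => ?_) hlim
  have hSN : 0 < S ω N := lt_of_lt_of_le one_pos (wgt_S_pos hω N)
  have hωN := hpos N
  have hb := wgt_circle_bound hω ha ha1 N
  rw [norm_div, Complex.norm_real, Real.norm_eq_abs,
    abs_of_pos hSN]
  rw [div_le_iff₀ hSN]
  calc ‖∑ k ∈ Finset.range (N + 1), a ^ k / (ω k : ℂ)‖
      ≤ C₀ * (2 / ω N + 1) := hb
  _ = C₀ * (2 / (ω N * S ω N) + 1 / S ω N) * S ω N := by
      field_simp

lemma wgt_outer_tendsto (hω : IsWeight ω) {a : ℂ} (ha : 1 < ‖a‖) :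
    Tendsto (fun N => (ω N : ℂ) * (∑ k ∈ Finset.range (N + 1), a ^ k / (ω k : ℂ)) / a ^ (N + 1))
      atTop (nhds (1 / (a - 1))) := by
  have hpos := hω.1
  have ha0 : a ≠ 0 := by
    intro h; rw [h] at ha; simp at ha; linarith
  have ha1' : a ≠ 1 := by
    intro h; rw [h] at ha; simp at ha
  have ha1 : a - 1 ≠ 0 := sub_ne_zero.mpr ha1'
  set A := ‖a‖ with hA
  have hA1 : 1 < A := ha
  have hr : ‖a⁻¹‖ < 1 := by
    rw [norm_inv]
    rw [inv_lt_one_iff₀]; right; exact hA1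
  -- rewrite as reflected sum
  have hre : ∀ N, (ω N : ℂ) * (∑ k ∈ Finset.range (N + 1), a ^ k / (ω k : ℂ)) / a ^ (N + 1)
      = ∑ j ∈ Finset.range (N + 1), ((ω N / ω (N - j) : ℝ) : ℂ) * (a⁻¹) ^ (j + 1) := by
    intro N
    rw [Finset.mul_sum, Finset.sum_div]
    rw [← Finset.sum_range_reflect]
    refine Finset.sum_congr rfl (fun j hj => ?_)
    simp only [Finset.mem_range] at hj
    have hjN : j ≤ N := by omega
    have h1 : N + 1 - 1 - j = N - j := by omega
    rw [h1]
    have hωj := hpos (N - j)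
    have hpow : a ^ (N + 1) = a ^ (N - j) * a ^ (j + 1) := by
      rw [← pow_add]; congr 1; omega
    have hajne : a ^ (N - j) ≠ 0 := pow_ne_zero _ ha0
    have hdiv : a ^ (N - j) / (a ^ (N - j) * a ^ (j+1)) = (a⁻¹) ^ (j+1) := by
      rw [div_mul_eq_div_div, div_self hajne, one_div, inv_pow]
    rw [Complex.ofReal_div, hpow, ← hdiv]
    ring
  simp only [hre]
  -- Tannery / dominated convergence
  set ε : ℝ := (A - 1) / 2 with hε
  have hεpos : 0 < ε := by rw [hε]; linarith
  obtain ⟨C, hC1, hC⟩ := wgt_ratio_bound hω hεpos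
  set ρ : ℝ := (1 + ε) * A⁻¹ with hρ
  have hApos : 0 < A := by linarith
  have hρpos : 0 < ρ := by
    have : 0 < A⁻¹ := by positivity
    rw [hρ]; nlinarith
  have hρlt : ρ < 1 := by
    rw [hρ, hε]
    rw [inv_eq_one_div, mul_one_div, div_lt_one hApos]
    linarith
  set F : ℕ → ℕ → ℂ := fun N j => if j ≤ N then ((ω N / ω (N - j) : ℝ) : ℂ) * (a⁻¹) ^ (j + 1) else 0 with hF
  have hsum_eq : ∀ N, ∑ j ∈ Finset.range (N + 1), ((ω N / ω (N - j) : ℝ) : ℂ) * (a⁻¹) ^ (j + 1)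
      = ∑' j, F N j := by
    intro N
    rw [tsum_eq_sum (s := Finset.range (N + 1)) (fun j hj => by
      simp only [Finset.mem_range, not_lt] at hj
      simp only [hF, if_neg (by omega : ¬ j ≤ N)])]
    refine Finset.sum_congr rfl (fun j hj => ?_)
    simp only [Finset.mem_range] at hj
    simp only [hF, if_pos (by omega : j ≤ N)]
  simp only [hsum_eq]
  have key : Tendsto (fun N => ∑' j, F N j) atTop (nhds (∑' j, (a⁻¹) ^ (j + 1))) := by
    refine tendsto_tsum_of_dominated_convergence
      (bound := fun j => (C * A⁻¹) * ρ ^ j) ?_ ?_ ?_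
    · refine Summable.mul_left _ ?_
      exact summable_geometric_of_lt_one hρpos.le hρlt
    · intro j
      have hev : (fun N => F N j) =ᶠ[atTop]
          (fun N => ((ω N / ω (N - j) : ℝ) : ℂ) * (a⁻¹) ^ (j + 1)) := by
        filter_upwards [eventually_ge_atTop j] with N hN
        simp only [hF, if_pos hN]
      have h1 : Tendsto (fun N => ((ω N / ω (N - j) : ℝ) : ℂ)) atTop (nhds ((1:ℝ):ℂ)) :=
        (Complex.continuous_ofReal.tendsto 1).comp (wgt_ratio_tendsto hω j)
      have := h1.mul_const ((a⁻¹) ^ (j + 1))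
      rw [Complex.ofReal_one, one_mul] at this
      exact this.congr' hev.symm
    · refine Eventually.of_forall (fun N j => ?_)
      by_cases hj : j ≤ N
      · simp only [hF, if_pos hj]
        rw [norm_mul, norm_pow, Complex.norm_real, Real.norm_eq_abs]
        have hrat : 0 < ω N / ω (N - j) := div_pos (hpos N) (hpos (N - j))
        rw [abs_of_pos hrat, norm_inv, ← hA]
        have h1 : ω N / ω (N - j) ≤ C * (1 + ε) ^ j := hC N j hj
        have h2 : (A⁻¹) ^ (j+1) = A⁻¹ * (A⁻¹)^j := by rw [pow_succ]; ring
        rw [h2]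
        have hAinv : (0:ℝ) < A⁻¹ := by positivity
        calc ω N / ω (N - j) * (A⁻¹ * (A⁻¹)^j) ≤ (C * (1+ε)^j) * (A⁻¹ * (A⁻¹)^j) := by
              refine mul_le_mul_of_nonneg_right h1 (by positivity)
        _ = (C * A⁻¹) * ((1+ε) * A⁻¹) ^ j := by rw [mul_pow]; ring
        _ = (C * A⁻¹) * ρ ^ j := by rw [hρ]
      · simp only [hF, if_neg hj, norm_zero]
        have : (0:ℝ) < A⁻¹ := by positivity
        positivity
  have hgeo : (∑' j, (a⁻¹) ^ (j + 1)) = 1 / (a - 1) := by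
    have h1 : ∀ j : ℕ, (a⁻¹) ^ (j + 1) = (a⁻¹) ^ j * a⁻¹ := fun j => by rw [pow_succ]
    simp only [h1]
    rw [tsum_mul_right]
    rw [tsum_geometric_of_norm_lt_one (by exact hr)]
    have h2 : (1 : ℂ) - a⁻¹ ≠ 0 :=
      sub_ne_zero.mpr (fun h => ha1' (inv_eq_one.mp h.symm))
    field_simp
  rw [hgeo] at key
  exact key

lemma kN_eq (ω : ℕ → ℝ) (N : ℕ) (z b : ℂ) :
    kN ω N z b = ∑ k ∈ Finset.range (N + 1), (z * starRingEnd ℂ b) ^ k / (ω k : ℂ) := by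
  unfold kN
  refine Finset.sum_congr rfl (fun k _ => ?_)
  rw [mul_pow]; ring

lemma sqrt_inv_sq {x : ℝ} (hx : 0 < x) : (Real.sqrt x)⁻¹ * (Real.sqrt x)⁻¹ = x⁻¹ := by
  have h := Real.mul_self_sqrt hx.le
  rw [← mul_inv]
  rw [h]

lemma sqrt_inv_cancel {x : ℝ} (hx : 0 < x) : (Real.sqrt x)⁻¹ * x * (Real.sqrt x)⁻¹ = 1 := by
  have h2 : (Real.sqrt x)⁻¹ * x * (Real.sqrt x)⁻¹
      = ((Real.sqrt x)⁻¹ * (Real.sqrt x)⁻¹) * x := by ring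
  rw [h2, sqrt_inv_sq hx, inv_mul_cancel₀ hx.ne']


end WgtAux

/-- Asymptotics of the diagonal cofactors `E_{i,i}` of the Gram matrix. -/
theorem cofactor_asymptotics
    (ω : ℕ → ℝ) (hω : IsWeight ω) (d d₁ : ℕ) (hd₁ : 1 ≤ d₁) (hd : d₁ ≤ d)
    (z : ℕ → ℂ) (hinj : Set.InjOn z (Set.Icc 1 d))
    (hcirc : ∀ i, 1 ≤ i → i ≤ d₁ → ‖z i‖ = 1)
    (hout : ∀ i, d₁ < i → i ≤ d → 1 < ‖z i‖)
    (i : ℕ) (hi1 : 1 ≤ i) (hi2 : i ≤ d₁) :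
    Filter.Tendsto
      (fun n =>
        (Matrix.det (Matrix.of fun l m : Fin (d - 1) =>
          kN ω (n + d) (z (if (l : ℕ) + 1 < i then (l : ℕ) + 1 else (l : ℕ) + 2))
            (z (if (m : ℕ) + 1 < i then (m : ℕ) + 1 else (m : ℕ) + 2)))) *
          ((ω (n + d) : ℂ)) ^ (d - d₁) /
          (((S ω (n + d) : ℝ) : ℂ) ^ (d₁ - 1) *
            ∏ l ∈ Finset.Icc (d₁ + 1) d, ((‖z l‖ : ℂ)) ^ (2 * (n + d + 1))))
      Filter.atTop
      (nhds (Matrix.det (Matrix.of fun l m : Fin (d - d₁) =>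
        1 / (starRingEnd ℂ (z ((m : ℕ) + 1 + d₁)) * z ((l : ℕ) + 1 + d₁) - 1)))) := by

  have hpos := hω.1
  set d₂ := d - d₁ with hd₂
  set e₁ := d₁ - 1 with he₁
  have hde : e₁ + d₂ = d - 1 := by omega
  -- the index map
  set τ : Fin e₁ ⊕ Fin d₂ → ℕ := Sum.elim
    (fun l => if (l : ℕ) + 1 < i then (l : ℕ) + 1 else (l : ℕ) + 2)
    (fun l => (l : ℕ) + 1 + d₁) with hτdef
  have hτ1 : ∀ s, 1 ≤ τ s ∧ τ s ≤ d := by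
    rintro (l | l)
    · have hl := l.isLt
      simp only [hτdef, Sum.elim_inl]
      split <;> omega
    · have hl := l.isLt
      simp only [hτdef, Sum.elim_inr]
      omega
  have hτcirc : ∀ l : Fin e₁, τ (Sum.inl l) ≤ d₁ := by
    intro l
    have hl := l.isLt
    simp only [hτdef, Sum.elim_inl]
    split <;> omega
  have hτout : ∀ l : Fin d₂, d₁ < τ (Sum.inr l) := by
    intro l
    simp only [hτdef, Sum.elim_inr]
    omega
  have hτinj : Function.Injective τ := by
    rintro (l | l) (m | m) h
    · simp only [hτdef, Sum.elim_inl] at h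
      have hl := l.isLt; have hm := m.isLt
      have : (l : ℕ) = (m : ℕ) := by split at h <;> split at h <;> omega
      exact congrArg Sum.inl (Fin.ext this)
    · have h1 := hτcirc l; have h2 := hτout m
      rw [h] at h1
      exact absurd h1 (not_le.mpr h2)
    · have h1 := hτcirc m; have h2 := hτout l
      rw [h] at h2
      exact absurd h1 (not_le.mpr h2)
    · simp only [hτdef, Sum.elim_inr] at h
      exact congrArg Sum.inr (Fin.ext (by omega))
  have hzτ : ∀ s t, z (τ s) = z (τ t) → s = t := by
    intro s t h
    exact hτinj (hinj (Set.mem_Icc.mpr (hτ1 s)) (Set.mem_Icc.mpr (hτ1 t)) h)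
  have habs1 : ∀ l : Fin e₁, ‖z (τ (Sum.inl l))‖ = 1 :=
    fun l => hcirc _ (hτ1 _).1 (hτcirc l)
  have habsout : ∀ l : Fin d₂, 1 < ‖z (τ (Sum.inr l))‖ :=
    fun l => hout _ (hτout l) (hτ1 _).2
  -- the reindexing equivalence
  set eqv : Fin e₁ ⊕ Fin d₂ ≃ Fin (d - 1) := finSumFinEquiv.trans (finCongr hde) with heqv
  have heqv_inl : ∀ l : Fin e₁, ((eqv (Sum.inl l) : ℕ)) = (l : ℕ) := by
    intro l; simp [heqv]
  have heqv_inr : ∀ l : Fin d₂, ((eqv (Sum.inr l) : ℕ)) = e₁ + (l : ℕ) := by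
    intro l; simp [heqv]
  have hidx : ∀ s, (if ((eqv s : ℕ)) + 1 < i then ((eqv s : ℕ)) + 1 else ((eqv s : ℕ)) + 2)
      = τ s := by
    rintro (l | l)
    · rw [heqv_inl]
      simp only [hτdef, Sum.elim_inl]
    · rw [heqv_inr]
      have hl := l.isLt
      simp only [hτdef, Sum.elim_inr]
      rw [if_neg (by omega)]
      omega
  -- matrices
  set E' : ℕ → Matrix (Fin e₁ ⊕ Fin d₂) (Fin e₁ ⊕ Fin d₂) ℂ :=
    fun N => Matrix.of fun s t => kN ω N (z (τ s)) (z (τ t)) with hE'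
  have hdet : ∀ N : ℕ, Matrix.det (Matrix.of fun l m : Fin (d - 1) =>
      kN ω N (z (if (l : ℕ) + 1 < i then (l : ℕ) + 1 else (l : ℕ) + 2))
        (z (if (m : ℕ) + 1 < i then (m : ℕ) + 1 else (m : ℕ) + 2)))
      = (E' N).det := by
    intro N
    rw [← Matrix.det_submatrix_equiv_self eqv]
    congr 1
    ext s t
    simp only [Matrix.submatrix_apply, Matrix.of_apply, hE']
    rw [hidx s, hidx t]
  -- scaling vectors
  set c : ℕ → (Fin e₁ ⊕ Fin d₂) → ℂ := fun N => Sum.elim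
    (fun _ => (((Real.sqrt (S ω N))⁻¹ : ℝ) : ℂ))
    (fun l => ((Real.sqrt (ω N) : ℝ) : ℂ) / z (τ (Sum.inr l)) ^ (N + 1)) with hc
  set c' : ℕ → (Fin e₁ ⊕ Fin d₂) → ℂ := fun N => Sum.elim
    (fun _ => (((Real.sqrt (S ω N))⁻¹ : ℝ) : ℂ))
    (fun m => ((Real.sqrt (ω N) : ℝ) : ℂ) / (starRingEnd ℂ (z (τ (Sum.inr m)))) ^ (N + 1))
    with hc'
  set G : ℕ → Matrix (Fin e₁ ⊕ Fin d₂) (Fin e₁ ⊕ Fin d₂) ℂ :=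
    fun N => Matrix.of fun s t => c N s * E' N s t * c' N t with hG
  have hGdet : ∀ N, (G N).det = (E' N).det * ((∏ s, c N s) * (∏ t, c' N t)) := by
    intro N
    have h1 : G N = Matrix.diagonal (c N) * E' N * Matrix.diagonal (c' N) := by
      ext s t
      simp only [hG, Matrix.of_apply, Matrix.mul_diagonal, Matrix.diagonal_mul]
    rw [h1, Matrix.det_mul, Matrix.det_mul, Matrix.det_diagonal, Matrix.det_diagonal]
    ring
  -- positivity facts
  have hSpos : ∀ N, (0:ℝ) < S ω N := fun N => lt_of_lt_of_le one_pos (wgt_S_pos hω N)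
  have hzout_ne : ∀ l : Fin d₂, z (τ (Sum.inr l)) ≠ 0 := by
    intro l h
    have h2 := habsout l
    rw [h, norm_zero] at h2
    exact absurd h2 (by norm_num)
  -- the product identity
  have hprod : ∀ N, (∏ s, c N s) * (∏ t, c' N t)
      = (ω N : ℂ) ^ d₂ / (((S ω N : ℝ) : ℂ) ^ e₁ *
          ∏ l ∈ Finset.Icc (d₁ + 1) d, ((‖z l‖ : ℂ)) ^ (2 * (N + 1))) := by
    intro N
    have hIcc : ∀ f : ℕ → ℂ, (∏ l ∈ Finset.Icc (d₁ + 1) d, f l)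
        = ∏ l : Fin d₂, f ((l : ℕ) + 1 + d₁) := by
      intro f
      rw [← Finset.Ico_add_one_right_eq_Icc, Finset.prod_Ico_eq_prod_range]
      have hcard : d + 1 - (d₁ + 1) = d₂ := by omega
      rw [hcard, ← Fin.prod_univ_eq_prod_range (fun j => f (d₁ + 1 + j)) d₂]
      exact Finset.prod_congr rfl (fun l _ => by congr 1; omega)
    rw [Fintype.prod_sum_type, Fintype.prod_sum_type]
    simp only [hc, hc', Sum.elim_inl, Sum.elim_inr, Finset.prod_const, Finset.card_univ,
      Fintype.card_fin]
    rw [hIcc (fun l => ((‖z l‖ : ℂ)) ^ (2 * (N + 1)))]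
    have hnormsq : ∀ l : Fin d₂,
        ((‖z ((l : ℕ) + 1 + d₁)‖ : ℂ)) ^ (2 * (N + 1))
        = z (τ (Sum.inr l)) ^ (N + 1) * (starRingEnd ℂ (z (τ (Sum.inr l)))) ^ (N + 1) := by
      intro l
      have hτl : τ (Sum.inr l) = (l : ℕ) + 1 + d₁ := by simp [hτdef]
      rw [← mul_pow, Complex.mul_conj, hτl]
      rw [pow_mul]
      congr 1
      rw [← Complex.sq_norm]
      push_cast
      ring
    -- rearrange
    have hs1 : (((Real.sqrt (S ω N))⁻¹ : ℝ) : ℂ) ^ e₁ * (((Real.sqrt (S ω N))⁻¹ : ℝ) : ℂ) ^ e₁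
        = (((S ω N : ℝ) : ℂ) ^ e₁)⁻¹ := by
      rw [← mul_pow, ← Complex.ofReal_mul, sqrt_inv_sq (hSpos N), ← inv_pow]
      push_cast
      ring
    have hsw : ∀ l : Fin d₂,
        (((Real.sqrt (ω N) : ℝ) : ℂ) / z (τ (Sum.inr l)) ^ (N + 1)) *
        (((Real.sqrt (ω N) : ℝ) : ℂ) / (starRingEnd ℂ (z (τ (Sum.inr l)))) ^ (N + 1))
        = (ω N : ℂ) / (z (τ (Sum.inr l)) ^ (N + 1) * (starRingEnd ℂ (z (τ (Sum.inr l)))) ^ (N + 1)) := by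
      intro l
      rw [div_mul_div_comm, ← Complex.ofReal_mul, Real.mul_self_sqrt (hpos N).le]
    calc (((Real.sqrt (S ω N))⁻¹ : ℝ) : ℂ) ^ e₁ *
          (∏ l : Fin d₂, ((Real.sqrt (ω N) : ℝ) : ℂ) / z (τ (Sum.inr l)) ^ (N + 1)) *
          ((((Real.sqrt (S ω N))⁻¹ : ℝ) : ℂ) ^ e₁ *
          ∏ m : Fin d₂, ((Real.sqrt (ω N) : ℝ) : ℂ) / (starRingEnd ℂ (z (τ (Sum.inr m)))) ^ (N + 1))
        = ((((Real.sqrt (S ω N))⁻¹ : ℝ) : ℂ) ^ e₁ * (((Real.sqrt (S ω N))⁻¹ : ℝ) : ℂ) ^ e₁) *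
          ∏ l : Fin d₂, ((((Real.sqrt (ω N) : ℝ) : ℂ) / z (τ (Sum.inr l)) ^ (N + 1)) *
            (((Real.sqrt (ω N) : ℝ) : ℂ) / (starRingEnd ℂ (z (τ (Sum.inr l)))) ^ (N + 1))) := by
          rw [Finset.prod_mul_distrib]; ring
    _ = (((S ω N : ℝ) : ℂ) ^ e₁)⁻¹ *
          ∏ l : Fin d₂, (ω N : ℂ) / (z (τ (Sum.inr l)) ^ (N + 1) *
            (starRingEnd ℂ (z (τ (Sum.inr l)))) ^ (N + 1)) := by
          rw [hs1, Finset.prod_congr rfl (fun l _ => hsw l)]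
    _ = (ω N : ℂ) ^ d₂ / (((S ω N : ℝ) : ℂ) ^ e₁ *
          ∏ l : Fin d₂, (z (τ (Sum.inr l)) ^ (N + 1) *
            (starRingEnd ℂ (z (τ (Sum.inr l)))) ^ (N + 1))) := by
          rw [Finset.prod_div_distrib, Finset.prod_const, Finset.card_univ, Fintype.card_fin]
          rw [div_eq_mul_inv, div_eq_mul_inv, mul_inv]
          ring
    _ = (ω N : ℂ) ^ d₂ / (((S ω N : ℝ) : ℂ) ^ e₁ *
          ∏ l : Fin d₂, ((‖z ((l : ℕ) + 1 + d₁)‖ : ℂ)) ^ (2 * (N + 1))) := by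
          rw [Finset.prod_congr rfl (fun l _ => (hnormsq l))]
  -- limit matrix
  set B : Matrix (Fin d₂) (Fin d₂) ℂ := Matrix.of fun l m =>
    1 / (starRingEnd ℂ (z ((m : ℕ) + 1 + d₁)) * z ((l : ℕ) + 1 + d₁) - 1) with hB
  set L : Matrix (Fin e₁ ⊕ Fin d₂) (Fin e₁ ⊕ Fin d₂) ℂ := Matrix.fromBlocks 1 0 0 B with hL
  -- auxiliary convergence: unimodular * (sqrt(ω S))⁻¹ → 0
  have hrt : Tendsto (fun N => (Real.sqrt (ω N) * Real.sqrt (S ω N))⁻¹) atTop (nhds 0) := by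
    have h1 : Tendsto (fun N => (ω N * S ω N)⁻¹) atTop (nhds 0) :=
      (wgt_wS_tendsto hω).inv_tendsto_atTop
    have h2 := (Real.continuous_sqrt.tendsto 0).comp h1
    rw [Real.sqrt_zero] at h2
    refine h2.congr (fun N => ?_)
    show Real.sqrt ((ω N * S ω N)⁻¹) = _
    rw [Real.sqrt_inv, Real.sqrt_mul (hpos N).le]
  have hcross : ∀ u : ℂ, ‖u‖ = 1 →
      Tendsto (fun N => u ^ (N + 1) * (((Real.sqrt (ω N) * Real.sqrt (S ω N) : ℝ) : ℂ))⁻¹)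
        atTop (nhds 0) := by
    intro u hu
    refine squeeze_zero_norm (fun N => ?_) hrt
    rw [norm_mul, norm_pow, hu, one_pow, one_mul, norm_inv,
      Complex.norm_real, Real.norm_eq_abs, abs_of_nonneg (by positivity)]
  -- nonvanishing facts
  have hzc_ne : ∀ l : Fin e₁, z (τ (Sum.inl l)) ≠ 0 := by
    intro l h
    have h2 := habs1 l
    rw [h, norm_zero] at h2
    exact absurd h2 (by norm_num)
  have hconj_sq : ∀ l : Fin e₁, z (τ (Sum.inl l)) * starRingEnd ℂ (z (τ (Sum.inl l))) = 1 := by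
    intro l
    rw [Complex.mul_conj]
    norm_cast
    rw [← Complex.sq_norm, habs1 l]
    norm_num
  -- entrywise convergence
  have hEntry : ∀ s t, Tendsto (fun N => G N s t) atTop (nhds (L s t)) := by
    have hsqω : ∀ N, ((Real.sqrt (ω N) : ℝ) : ℂ) * ((Real.sqrt (ω N) : ℝ) : ℂ) = ((ω N : ℝ) : ℂ) := by
      intro N
      rw [← Complex.ofReal_mul, Real.mul_self_sqrt (hpos N).le]
    have hsωne : ∀ N, ((Real.sqrt (ω N) : ℝ) : ℂ) ≠ 0 := by
      intro N
      have := hpos N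
      simp only [ne_eq, Complex.ofReal_eq_zero]
      positivity
    have hsSne : ∀ N, ((Real.sqrt (S ω N) : ℝ) : ℂ) ≠ 0 := by
      intro N
      have := hSpos N
      simp only [ne_eq, Complex.ofReal_eq_zero]
      positivity
    rintro (a | a) (b | b)
    · rcases eq_or_ne a b with rfl | hab
      · have hone : ∀ N, G N (Sum.inl a) (Sum.inl a) = 1 := by
          intro N
          simp only [hG, Matrix.of_apply, hc, hc', Sum.elim_inl, hE', kN_eq]
          simp only [hconj_sq a, one_pow]
          have hsum : (∑ k ∈ Finset.range (N+1), (1:ℂ) / ((ω k : ℝ) : ℂ)) = ((S ω N : ℝ) : ℂ) := by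
            rw [S]
            push_cast
            rfl
          rw [hsum]
          rw [← Complex.ofReal_mul, ← Complex.ofReal_mul, sqrt_inv_cancel (hSpos N),
            Complex.ofReal_one]
        have hLa : L (Sum.inl a) (Sum.inl a) = 1 := by
          simp [hL, Matrix.fromBlocks_apply₁₁, Matrix.one_apply_eq]
        rw [hLa]
        exact tendsto_const_nhds.congr (fun N => (hone N).symm)
      · have hA1 : ‖z (τ (Sum.inl a)) * starRingEnd ℂ (z (τ (Sum.inl b)))‖ = 1 := by
          rw [norm_mul, Complex.norm_conj, habs1 a, habs1 b, one_mul]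
        have hAne : z (τ (Sum.inl a)) * starRingEnd ℂ (z (τ (Sum.inl b))) ≠ 1 := by
          intro h
          have hzz : z (τ (Sum.inl a)) = z (τ (Sum.inl b)) := by
            calc z (τ (Sum.inl a))
                = z (τ (Sum.inl a)) * (starRingEnd ℂ (z (τ (Sum.inl b))) * z (τ (Sum.inl b))) := by
                  rw [mul_comm (starRingEnd ℂ _) _, hconj_sq b, mul_one]
            _ = (z (τ (Sum.inl a)) * starRingEnd ℂ (z (τ (Sum.inl b)))) * z (τ (Sum.inl b)) := by
                  ring
            _ = z (τ (Sum.inl b)) := by rw [h, one_mul]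
          exact hab (Sum.inl.inj (hzτ _ _ hzz))
        have heq : ∀ N, G N (Sum.inl a) (Sum.inl b)
            = (∑ k ∈ Finset.range (N+1),
                (z (τ (Sum.inl a)) * starRingEnd ℂ (z (τ (Sum.inl b)))) ^ k / ((ω k : ℝ) : ℂ))
              / ((S ω N : ℝ) : ℂ) := by
          intro N
          simp only [hG, Matrix.of_apply, hc, hc', Sum.elim_inl, hE', kN_eq]
          have hss : (((Real.sqrt (S ω N))⁻¹ : ℝ) : ℂ) * (((Real.sqrt (S ω N))⁻¹ : ℝ) : ℂ)
              = (((S ω N : ℝ) : ℂ))⁻¹ := by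
            rw [← Complex.ofReal_mul, sqrt_inv_sq (hSpos N), Complex.ofReal_inv]
          rw [div_eq_mul_inv, ← hss]
          ring
        have hL0 : L (Sum.inl a) (Sum.inl b) = 0 := by
          simp only [hL, Matrix.fromBlocks_apply₁₁]
          exact Matrix.one_apply_ne hab
        rw [hL0]
        exact (wgt_circle_tendsto hω hA1 hAne).congr (fun N => (heq N).symm)
    · -- inl inr : cross term → 0
      have hA : 1 < ‖z (τ (Sum.inl a)) * starRingEnd ℂ (z (τ (Sum.inr b)))‖ := by
        rw [norm_mul, Complex.norm_conj, habs1 a, one_mul]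
        exact habsout b
      have hcv_ne : starRingEnd ℂ (z (τ (Sum.inr b))) ≠ 0 := by
        simp only [ne_eq, _root_.map_eq_zero]
        exact hzout_ne b
      have heq : ∀ N, G N (Sum.inl a) (Sum.inr b)
          = ((ω N : ℂ) * (∑ k ∈ Finset.range (N+1),
              (z (τ (Sum.inl a)) * starRingEnd ℂ (z (τ (Sum.inr b)))) ^ k / ((ω k : ℝ) : ℂ))
              / (z (τ (Sum.inl a)) * starRingEnd ℂ (z (τ (Sum.inr b)))) ^ (N+1))
            * (z (τ (Sum.inl a)) ^ (N+1) * (((Real.sqrt (ω N) * Real.sqrt (S ω N) : ℝ) : ℂ))⁻¹) := by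
        intro N
        simp only [hG, Matrix.of_apply, hc, hc', Sum.elim_inl, Sum.elim_inr, hE', kN_eq]
        have h1 := hzc_ne a
        have h2 := hcv_ne
        have h3 := hsωne N
        have h4 := hsSne N
        rw [mul_pow]
        push_cast
        field_simp
        rw [← hsqω N]
        ring
      have hlim := (wgt_outer_tendsto hω hA).mul (hcross _ (habs1 a))
      rw [mul_zero] at hlim
      have hL0 : L (Sum.inl a) (Sum.inr b) = 0 := by
        simp [hL, Matrix.fromBlocks_apply₁₂]
      rw [hL0]
      exact hlim.congr (fun N => (heq N).symm)
    · -- inr inl : cross term → 0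
      have hA : 1 < ‖z (τ (Sum.inr a)) * starRingEnd ℂ (z (τ (Sum.inl b)))‖ := by
        rw [norm_mul, Complex.norm_conj, habs1 b, mul_one]
        exact habsout a
      have hcw1 : ‖starRingEnd ℂ (z (τ (Sum.inl b)))‖ = 1 := by
        rw [Complex.norm_conj, habs1 b]
      have heq : ∀ N, G N (Sum.inr a) (Sum.inl b)
          = ((ω N : ℂ) * (∑ k ∈ Finset.range (N+1),
              (z (τ (Sum.inr a)) * starRingEnd ℂ (z (τ (Sum.inl b)))) ^ k / ((ω k : ℝ) : ℂ))
              / (z (τ (Sum.inr a)) * starRingEnd ℂ (z (τ (Sum.inl b)))) ^ (N+1))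
            * ((starRingEnd ℂ (z (τ (Sum.inl b)))) ^ (N+1)
              * (((Real.sqrt (ω N) * Real.sqrt (S ω N) : ℝ) : ℂ))⁻¹) := by
        intro N
        simp only [hG, Matrix.of_apply, hc, hc', Sum.elim_inl, Sum.elim_inr, hE', kN_eq]
        have h1 := hzout_ne a
        have h2 : starRingEnd ℂ (z (τ (Sum.inl b))) ≠ 0 := by
          simp only [ne_eq, _root_.map_eq_zero]
          exact hzc_ne b
        have h3 := hsωne N
        have h4 := hsSne N
        rw [mul_pow]
        push_cast
        field_simp
        rw [← hsqω N]
        ring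
      have hlim := (wgt_outer_tendsto hω hA).mul (hcross _ hcw1)
      rw [mul_zero] at hlim
      have hL0 : L (Sum.inr a) (Sum.inl b) = 0 := by
        simp [hL, Matrix.fromBlocks_apply₂₁]
      rw [hL0]
      exact hlim.congr (fun N => (heq N).symm)
    · -- inr inr : outer block
      have hA : 1 < ‖z (τ (Sum.inr a)) * starRingEnd ℂ (z (τ (Sum.inr b)))‖ := by
        rw [norm_mul, Complex.norm_conj]
        have h1 := habsout a
        have h2 := habsout b
        nlinarith
      have heq : ∀ N, G N (Sum.inr a) (Sum.inr b)
          = (ω N : ℂ) * (∑ k ∈ Finset.range (N+1),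
              (z (τ (Sum.inr a)) * starRingEnd ℂ (z (τ (Sum.inr b)))) ^ k / ((ω k : ℝ) : ℂ))
              / (z (τ (Sum.inr a)) * starRingEnd ℂ (z (τ (Sum.inr b)))) ^ (N+1) := by
        intro N
        simp only [hG, Matrix.of_apply, hc, hc', Sum.elim_inr, hE', kN_eq]
        have h1 := hzout_ne a
        have h2 : starRingEnd ℂ (z (τ (Sum.inr b))) ≠ 0 := by
          simp only [ne_eq, _root_.map_eq_zero]
          exact hzout_ne b
        have h3 := hsωne N
        rw [mul_pow]
        push_cast
        field_simp
        rw [← hsqω N]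
        ring
      have hLB : L (Sum.inr a) (Sum.inr b)
          = 1 / (z (τ (Sum.inr a)) * starRingEnd ℂ (z (τ (Sum.inr b))) - 1) := by
        simp only [hL, Matrix.fromBlocks_apply₂₂, hB, Matrix.of_apply]
        have hτa : τ (Sum.inr a) = (a : ℕ) + 1 + d₁ := by simp [hτdef]
        have hτb : τ (Sum.inr b) = (b : ℕ) + 1 + d₁ := by simp [hτdef]
        rw [hτa, hτb, mul_comm]
      rw [hLB]
      exact (wgt_outer_tendsto hω hA).congr (fun N => (heq N).symm)
  -- determinant converges
  have hGL : Tendsto (fun N => G N) atTop (nhds L) :=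
    tendsto_pi_nhds.mpr (fun s => tendsto_pi_nhds.mpr (fun t => hEntry s t))
  have hdetT : Tendsto (fun N => (G N).det) atTop (nhds L.det) :=
    ((continuous_id.matrix_det).tendsto L).comp hGL
  have hdetL : L.det = B.det := by
    rw [hL, Matrix.det_fromBlocks_zero₂₁, Matrix.det_one, one_mul]
  -- put everything together
  have hΦ : ∀ N : ℕ, (Matrix.det (Matrix.of fun l m : Fin (d - 1) =>
      kN ω N (z (if (l : ℕ) + 1 < i then (l : ℕ) + 1 else (l : ℕ) + 2))
        (z (if (m : ℕ) + 1 < i then (m : ℕ) + 1 else (m : ℕ) + 2)))) *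
      ((ω N : ℂ)) ^ d₂ /
      (((S ω N : ℝ) : ℂ) ^ e₁ *
        ∏ l ∈ Finset.Icc (d₁ + 1) d, ((‖z l‖ : ℂ)) ^ (2 * (N + 1)))
      = (G N).det := by
    intro N
    rw [hGdet N, hprod N, hdet N, mul_div_assoc]
  have hmain : Tendsto (fun N : ℕ => (Matrix.det (Matrix.of fun l m : Fin (d - 1) =>
      kN ω N (z (if (l : ℕ) + 1 < i then (l : ℕ) + 1 else (l : ℕ) + 2))
        (z (if (m : ℕ) + 1 < i then (m : ℕ) + 1 else (m : ℕ) + 2)))) *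
      ((ω N : ℂ)) ^ d₂ /
      (((S ω N : ℝ) : ℂ) ^ e₁ *
        ∏ l ∈ Finset.Icc (d₁ + 1) d, ((‖z l‖ : ℂ)) ^ (2 * (N + 1))))
      atTop (nhds B.det) := by
    rw [← hdetL]
    exact hdetT.congr (fun N => (hΦ N).symm)
  exact hmain.comp (tendsto_add_atTop_nat d)

end
end
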